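/- arXiv:math/0603447 — 3 statements merged into one kernel-verified Lean document; each statement's English description precedes it below -/
import Mathlib

section
/- (Corollary 1, lower bound) Let κ ≥ 1 and let M ≥ 3 and n be integers with 2 log₂ M ≤ n, and assume 𝒳 is infinite. For every a > 0 there exist a constant C(a) > 0 depending only on a and κ and a set ℱ = {f₁,…,f_M} of measurable prediction rules 𝒳→{−1,1} such that for every classifier f̄_n (any measurable function of the sample D_n and of X with values in {−1,1}) there exists a probability measure π satisfying MA(κ) for which E[R(f̄_n) − R*] ≥ 2(1+a) min_{f∈ℱ}(R(f)−R*) + C(a) ((log M)/n)^{κ/(2κ−1)}. -/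
open MeasureTheory
open scoped ENNReal NNReal

noncomputable section

namespace AggClass

variable {X : Type*} [MeasurableSpace X]

/-- The sign function, with the convention `sgn 0 = 1`. -/
def sgn (t : ℝ) : ℝ := if 0 ≤ t then 1 else -1

/-- The Bayes rule `f*(x) = sign (2 η x - 1)`. -/
def bayes (η : X → ℝ) : X → ℝ := fun x => sgn (2 * η x - 1)

/-- The hinge risk `A(f) = E[max (1 - Y f(X)) 0]`, as an extended nonnegative real. -/
def hingeRiskE (π : Measure (X × ℝ)) (f : X → ℝ) : ℝ≥0∞ :=
  ∫⁻ p, ENNReal.ofReal (max (1 - p.2 * f p.1) 0) ∂π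

/-- The optimal hinge risk `A* = inf {A(f) : f : X → ℝ measurable}`. -/
def optHingeRiskE (π : Measure (X × ℝ)) : ℝ≥0∞ :=
  ⨅ (f : X → ℝ) (_ : Measurable f), hingeRiskE π f

/-- The hinge risk, real-valued. -/
def hingeRisk (π : Measure (X × ℝ)) (f : X → ℝ) : ℝ := (hingeRiskE π f).toReal

/-- The optimal hinge risk, real-valued. -/
def optHingeRisk (π : Measure (X × ℝ)) : ℝ := (optHingeRiskE π).toReal

/-- The misclassification risk `R(f) = π (Y ≠ sign (f X))`, ℝ≥0∞-valued. -/
def misRiskE (π : Measure (X × ℝ)) (f : X → ℝ) : ℝ≥0∞ :=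
  π {p : X × ℝ | p.2 ≠ sgn (f p.1)}

/-- The misclassification risk, real-valued. -/
def misRisk (π : Measure (X × ℝ)) (f : X → ℝ) : ℝ := (misRiskE π f).toReal

/-- `π` is a joint law of a pair (X,Y) on `X × {-1,1}` with regression function
`η x = π(Y = 1 ∣ X = x)`. -/
structure IsClassif (π : Measure (X × ℝ)) (η : X → ℝ) : Prop where
  labels : π {p : X × ℝ | p.2 = 1 ∨ p.2 = -1}ᶜ = 0
  meas : Measurable η
  mem01 : ∀ x, η x ∈ Set.Icc (0 : ℝ) 1
  cond : ∀ B : Set X, MeasurableSet B →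
    π (B ×ˢ ({1} : Set ℝ)) = ∫⁻ x in B, ENNReal.ofReal (η x) ∂(π.map Prod.fst)

/-- Margin assumption MA(κ) with constant c₀ : for every measurable prediction rule
`f : X → {-1,1}`, `E[|f(X) - f*(X)|] ≤ c₀ (R(f) - R*)^(1/κ)`. -/
def MA (π : Measure (X × ℝ)) (η : X → ℝ) (κ c₀ : ℝ) : Prop :=
  ∀ f : X → ℝ, Measurable f → (∀ x, f x = 1 ∨ f x = -1) →
    ∫ x, |f x - bayes η x| ∂(π.map Prod.fst)
      ≤ c₀ * (misRisk π f - misRisk π (bayes η)) ^ (1 / κ)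

/-- Margin assumption for the hinge risk MAH(κ) with constant c : for every measurable
`f : X → [-1,1]`, `E[|f(X) - f*(X)|] ≤ c (A(f) - A*)^(1/κ)`. -/
def MAH (π : Measure (X × ℝ)) (η : X → ℝ) (κ c : ℝ) : Prop :=
  ∀ f : X → ℝ, Measurable f → (∀ x, f x ∈ Set.Icc (-1 : ℝ) 1) →
    ∫ x, |f x - bayes η x| ∂(π.map Prod.fst)
      ≤ c * (hingeRisk π f - optHingeRisk π) ^ (1 / κ)

/-- Convex combination of f₁,…,f_M with weights w. -/
def convComb {M : ℕ} (f : Fin M → X → ℝ) (w : Fin M → ℝ) : X → ℝ :=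
  fun x => ∑ j, w j * f j x

/-- The set of hinge risks of the elements of the convex hull of f₁,…,f_M. -/
def convRiskSet (π : Measure (X × ℝ)) {M : ℕ} (f : Fin M → X → ℝ) : Set ℝ :=
  {a | ∃ w : Fin M → ℝ, (∀ j, 0 ≤ w j) ∧ (∑ j, w j) = 1 ∧ a = hingeRisk π (convComb f w)}

/-- The law of an i.i.d. sample of size n from π. -/
def sample {α : Type*} [MeasurableSpace α] (π : Measure α) [SigmaFinite π] (n : ℕ) :
    Measure (Fin n → α) :=
  Measure.pi fun _ => π

/-- The empirical hinge risk on the sample D. -/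
def empHinge {n : ℕ} (D : Fin n → X × ℝ) (f : X → ℝ) : ℝ :=
  (n : ℝ)⁻¹ * ∑ i, max (1 - (D i).2 * f (D i).1) 0

/-- The empirical misclassification risk on the sample D. -/
def empMis {n : ℕ} (D : Fin n → X × ℝ) (f : X → ℝ) : ℝ :=
  (n : ℝ)⁻¹ * ∑ i, if (D i).2 ≠ f (D i).1 then (1 : ℝ) else 0

/-- The set of indices minimizing the empirical hinge risk. -/
def ermSet {n M : ℕ} (f : Fin M → X → ℝ) (D : Fin n → X × ℝ) : Finset (Fin M) :=
  Finset.univ.filter fun j => ∀ k, empHinge D (f j) ≤ empHinge D (f k)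

/-- `tf` is an empirical risk minimization (ERM) aggregate for the hinge loss. -/
def IsERM {n M : ℕ} (f : Fin M → X → ℝ) (tf : (Fin n → X × ℝ) → X → ℝ) : Prop :=
  ∀ D, ∃ j ∈ ermSet f D, tf D = f j

/-- `tf` is the averaged ERM (AERM) aggregate for the hinge loss. -/
def IsAERM {n M : ℕ} (f : Fin M → X → ℝ) (tf : (Fin n → X × ℝ) → X → ℝ) : Prop :=
  ∀ D, tf D = fun x => ((ermSet f D).card : ℝ)⁻¹ * ∑ j ∈ ermSet f D, f j x

/-- The exponential weights for the hinge loss. -/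
def aewWeight {n M : ℕ} (f : Fin M → X → ℝ) (D : Fin n → X × ℝ) (j : Fin M) : ℝ :=
  Real.exp (-(n : ℝ) * empHinge D (f j)) / ∑ k, Real.exp (-(n : ℝ) * empHinge D (f k))

/-- `tf` is the aggregation-with-exponential-weights (AEW) aggregate for the hinge loss. -/
def IsAEW {n M : ℕ} (f : Fin M → X → ℝ) (tf : (Fin n → X × ℝ) → X → ℝ) : Prop :=
  ∀ D, tf D = fun x => ∑ j, aewWeight f D j * f j x

/-- Empirical hinge risk on the first k observations of the sample D. -/
def empHingeK {n : ℕ} (D : Fin n → X × ℝ) (k : ℕ) (f : X → ℝ) : ℝ :=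
  (k : ℝ)⁻¹ * ∑ i ∈ Finset.univ.filter (fun i : Fin n => (i : ℕ) < k),
    max (1 - (D i).2 * f (D i).1) 0

/-- The cumulative exponential weights for the hinge loss. -/
def caewWeight {n M : ℕ} (f : Fin M → X → ℝ) (D : Fin n → X × ℝ) (j : Fin M) : ℝ :=
  (n : ℝ)⁻¹ * ∑ k ∈ Finset.Icc 1 n,
    Real.exp (-(k : ℝ) * empHingeK D k (f j)) /
      ∑ l, Real.exp (-(k : ℝ) * empHingeK D k (f l))


/-! ### Auxiliary machinery for the lower bound -/

set_option linter.unusedSectionVars false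

section LowerBoundAux

/-- ±1 value of a Bool. -/
def sgB (b : Bool) : ℝ := if b then 1 else -1

@[simp] lemma sgB_true : sgB true = 1 := rfl
@[simp] lemma sgB_false : sgB false = -1 := rfl
lemma sgB_pm (b : Bool) : sgB b = 1 ∨ sgB b = -1 := by cases b <;> simp [sgB]
lemma sgB_not (b : Bool) : sgB (!b) = -sgB b := by cases b <;> simp [sgB]

lemma sgn_pm {u : ℝ} (hu : u = 1 ∨ u = -1) : sgn u = u := by
  rcases hu with h | h <;> rw [h] <;> norm_num [sgn]

variable {α : Type*} [MeasurableSpace α] {ι : Type*} [Fintype ι]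

lemma sqrt_prod {s : Finset ι} (f : ι → ℝ) (hf : ∀ i, 0 ≤ f i) :
    Real.sqrt (∏ i ∈ s, f i) = ∏ i ∈ s, Real.sqrt (f i) := by
  classical
  induction s using Finset.induction with
  | empty => simp
  | insert _ _ h ih =>
      rw [Finset.prod_insert h, Finset.prod_insert h, Real.sqrt_mul (hf _), ih]

lemma atomic_apply (Q : ι → ℝ≥0∞) (a : ι → α) {S : Set α} (hS : MeasurableSet S) :
    (∑ k, Q k • Measure.dirac (a k)) S = ∑ k, Q k * S.indicator 1 (a k) := by
  rw [Measure.finset_sum_apply]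
  refine Finset.sum_congr rfl fun k _ => ?_
  rw [Measure.smul_apply, Measure.dirac_apply' _ hS, smul_eq_mul]

lemma atomic_isProb (Q : ι → ℝ≥0∞) (a : ι → α) (hQ : ∑ k, Q k = 1) :
    IsProbabilityMeasure (∑ k, Q k • Measure.dirac (a k)) := by
  constructor
  rw [atomic_apply Q a MeasurableSet.univ]
  simpa using hQ

lemma pi_atomic [DecidableEq ι] (n : ℕ) (Q : ι → ℝ≥0∞) (a : ι → α) (hQ : ∑ k, Q k = 1) :
    Measure.pi (fun _ : Fin n => ∑ k, Q k • Measure.dirac (a k)) =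
      ∑ v : Fin n → ι, (∏ i, Q (v i)) • Measure.dirac (fun i => a (v i)) := by
  haveI := atomic_isProb Q a hQ
  refine Measure.pi_eq fun s hs => ?_
  rw [Measure.finset_sum_apply]
  have key : ∀ v : Fin n → ι,
      ((∏ i, Q (v i)) • Measure.dirac (fun i => a (v i))) (Set.univ.pi s)
      = ∏ i, (Q (v i) * (s i).indicator 1 (a (v i))) := by
    intro v
    rw [Measure.smul_apply, Measure.dirac_apply' _ (MeasurableSet.univ_pi hs), smul_eq_mul,
      Finset.prod_mul_distrib]
    congr 1
    classical
    simp only [Set.indicator_apply, Pi.one_apply, Set.mem_univ_pi]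
    rw [Finset.prod_boole]
    simp
  calc ∑ v : Fin n → ι, ((∏ i, Q (v i)) • Measure.dirac (fun i => a (v i))) (Set.univ.pi s)
      = ∑ v : Fin n → ι, ∏ i, (Q (v i) * (s i).indicator 1 (a (v i))) :=
        Finset.sum_congr rfl fun v _ => key v
    _ = ∏ i, ∑ k, (Q k * (s i).indicator 1 (a k)) := by
        rw [Finset.prod_univ_sum]
        rw [Fintype.piFinset_univ]
    _ = ∏ i, (∑ k, Q k • Measure.dirac (a k)) (s i) :=
        Finset.prod_congr rfl fun i _ => (atomic_apply Q a (hs i)).symm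

open scoped Classical in
lemma test_bound [DecidableEq ι] {n : ℕ} (p q : ι → ℝ) (hp : ∀ k, 0 ≤ p k) (hq : ∀ k, 0 ≤ q k)
    (hp1 : ∑ k, p k = 1) (hq1 : ∑ k, q k = 1)
    (A B : (Fin n → ι) → Prop)
    (hAB : ∀ v, A v ∨ B v) :
    ((∑ k, Real.sqrt (p k * q k)) ^ n) ^ 2 / 2 ≤
      (∑ v : Fin n → ι, (∏ i, p (v i)) * (if A v then 1 else 0))
      + ∑ v : Fin n → ι, (∏ i, q (v i)) * (if B v then 1 else 0) := by
  set P : (Fin n → ι) → ℝ := fun v => ∏ i, p (v i) with hP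
  set Q : (Fin n → ι) → ℝ := fun v => ∏ i, q (v i) with hQ
  have hPn : ∀ v, 0 ≤ P v := fun v => Finset.prod_nonneg fun i _ => hp _
  have hQn : ∀ v, 0 ≤ Q v := fun v => Finset.prod_nonneg fun i _ => hq _
  have hPs : ∑ v : Fin n → ι, P v = 1 := by
    have := Finset.prod_univ_sum (fun _ : Fin n => (Finset.univ : Finset ι)) (fun _ k => p k)
    rw [Fintype.piFinset_univ] at this
    rw [hP, ← this]
    simp [hp1]
  have hQs : ∑ v : Fin n → ι, Q v = 1 := by
    have := Finset.prod_univ_sum (fun _ : Fin n => (Finset.univ : Finset ι)) (fun _ k => q k)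
    rw [Fintype.piFinset_univ] at this
    rw [hQ, ← this]
    simp [hq1]
  have hmin : ∑ v : Fin n → ι, min (P v) (Q v) ≤
      (∑ v : Fin n → ι, P v * (if A v then 1 else 0))
      + ∑ v : Fin n → ι, Q v * (if B v then 1 else 0) := by
    rw [← Finset.sum_add_distrib]
    refine Finset.sum_le_sum fun v _ => ?_
    rcases hAB v with hv | hv
    · simp only [hv, if_true, mul_one]
      calc min (P v) (Q v) ≤ P v := min_le_left _ _
        _ ≤ P v + Q v * (if B v then 1 else 0) := by
            have : 0 ≤ Q v * (if B v then 1 else 0) :=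
              mul_nonneg (hQn v) (by split <;> norm_num)
            linarith
    · simp only [hv, if_true, mul_one]
      calc min (P v) (Q v) ≤ Q v := min_le_right _ _
        _ ≤ P v * (if A v then 1 else 0) + Q v := by
            have : 0 ≤ P v * (if A v then 1 else 0) :=
              mul_nonneg (hPn v) (by split <;> norm_num)
            linarith
  have hCS : (∑ v : Fin n → ι, Real.sqrt (P v * Q v)) ^ 2 ≤
      (∑ v : Fin n → ι, min (P v) (Q v)) * 2 := by
    have h1 : (∑ v : Fin n → ι, Real.sqrt (P v * Q v)) ^ 2 ≤
        (∑ v : Fin n → ι, min (P v) (Q v)) * (∑ v : Fin n → ι, max (P v) (Q v)) := by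
      have := Finset.sum_mul_sq_le_sq_mul_sq (Finset.univ : Finset (Fin n → ι))
        (fun v => Real.sqrt (min (P v) (Q v))) (fun v => Real.sqrt (max (P v) (Q v)))
      have heq : ∀ v : Fin n → ι, Real.sqrt (min (P v) (Q v)) * Real.sqrt (max (P v) (Q v))
          = Real.sqrt (P v * Q v) := by
        intro v
        rw [← Real.sqrt_mul (le_min (hPn v) (hQn v)), min_mul_max]
      have hsq : ∀ v : Fin n → ι, Real.sqrt (min (P v) (Q v)) ^ 2 = min (P v) (Q v) :=
        fun v => Real.sq_sqrt (le_min (hPn v) (hQn v))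
      have hsq' : ∀ v : Fin n → ι, Real.sqrt (max (P v) (Q v)) ^ 2 = max (P v) (Q v) :=
        fun v => Real.sq_sqrt (le_max_of_le_left (hPn v))
      calc (∑ v : Fin n → ι, Real.sqrt (P v * Q v)) ^ 2
          = (∑ v : Fin n → ι, Real.sqrt (min (P v) (Q v)) * Real.sqrt (max (P v) (Q v))) ^ 2 := by
            rw [Finset.sum_congr rfl fun v _ => (heq v).symm]
        _ ≤ (∑ v : Fin n → ι, Real.sqrt (min (P v) (Q v)) ^ 2)
            * ∑ v : Fin n → ι, Real.sqrt (max (P v) (Q v)) ^ 2 := this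
        _ = (∑ v : Fin n → ι, min (P v) (Q v)) * ∑ v : Fin n → ι, max (P v) (Q v) := by
            rw [Finset.sum_congr rfl fun v _ => hsq v, Finset.sum_congr rfl fun v _ => hsq' v]
    have h2 : ∑ v : Fin n → ι, max (P v) (Q v) ≤ 2 := by
      calc ∑ v : Fin n → ι, max (P v) (Q v) ≤ ∑ v : Fin n → ι, (P v + Q v) :=
            Finset.sum_le_sum fun v _ => max_le_add_of_nonneg (hPn v) (hQn v)
        _ = 2 := by rw [Finset.sum_add_distrib, hPs, hQs]; norm_num
    calc (∑ v : Fin n → ι, Real.sqrt (P v * Q v)) ^ 2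
        ≤ (∑ v : Fin n → ι, min (P v) (Q v)) * (∑ v : Fin n → ι, max (P v) (Q v)) := h1
      _ ≤ (∑ v : Fin n → ι, min (P v) (Q v)) * 2 := by
          refine mul_le_mul_of_nonneg_left h2 ?_
          exact Finset.sum_nonneg fun v _ => le_min (hPn v) (hQn v)
  have hhell : ∑ v : Fin n → ι, Real.sqrt (P v * Q v)
      = (∑ k, Real.sqrt (p k * q k)) ^ n := by
    have h3 : ∀ v : Fin n → ι, Real.sqrt (P v * Q v) = ∏ i, Real.sqrt (p (v i) * q (v i)) := by
      intro v
      rw [hP, hQ]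
      simp only
      rw [← Finset.prod_mul_distrib, sqrt_prod _ (fun i => mul_nonneg (hp _) (hq _))]
    rw [Finset.sum_congr rfl fun v _ => h3 v]
    have := Finset.prod_univ_sum (fun _ : Fin n => (Finset.univ : Finset ι))
      (fun _ k => Real.sqrt (p k * q k))
    rw [Fintype.piFinset_univ] at this
    rw [← this, Finset.prod_const, Finset.card_univ, Fintype.card_fin]
  calc ((∑ k, Real.sqrt (p k * q k)) ^ n) ^ 2 / 2
      = (∑ v : Fin n → ι, Real.sqrt (P v * Q v)) ^ 2 / 2 := by rw [hhell]
    _ ≤ ∑ v : Fin n → ι, min (P v) (Q v) := by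
        rw [div_le_iff₀ (by norm_num : (0:ℝ) < 2)]
        exact hCS
    _ ≤ _ := hmin

open scoped Classical in
lemma atomic_pi_toReal [DecidableEq ι] {n : ℕ} (r : ι → ℝ) (hr : ∀ k, 0 ≤ r k)
    (hr1 : ∑ k, r k = 1) (a : ι → α) {S : Set (Fin n → α)} (hS : MeasurableSet S) :
    ((Measure.pi fun _ : Fin n => ∑ k, ENNReal.ofReal (r k) • Measure.dirac (a k)) S).toReal
      = ∑ v : Fin n → ι, (∏ i, r (v i)) * (if (fun i => a (v i)) ∈ S then 1 else 0) := by
  have hQ1 : ∑ k, ENNReal.ofReal (r k) = 1 := by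
    rw [← ENNReal.ofReal_sum_of_nonneg (fun i _ => hr i), hr1, ENNReal.ofReal_one]
  rw [pi_atomic n _ a hQ1, atomic_apply _ _ hS]
  rw [ENNReal.toReal_sum]
  · refine Finset.sum_congr rfl fun v _ => ?_
    rw [ENNReal.toReal_mul, ENNReal.toReal_prod]
    congr 1
    · exact Finset.prod_congr rfl fun i _ => ENNReal.toReal_ofReal (hr _)
    · by_cases hv : (fun i => a (v i)) ∈ S
      · simp [Set.indicator_of_mem hv, hv]
      · simp [Set.indicator_of_notMem hv, hv]
  · intro v _
    refine ENNReal.mul_ne_top ?_ ?_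
    · refine (ENNReal.prod_lt_top ?_).ne
      intro i _
      exact ENNReal.ofReal_lt_top
    · by_cases hv : (fun i => a (v i)) ∈ S
      · simp [Set.indicator_of_mem hv]
      · simp [Set.indicator_of_notMem hv]

open scoped Classical in
lemma measure_pair_bound [DecidableEq ι] {n : ℕ} (p q : ι → ℝ) (hp : ∀ k, 0 ≤ p k)
    (hq : ∀ k, 0 ≤ q k) (hp1 : ∑ k, p k = 1) (hq1 : ∑ k, q k = 1) (a : ι → α)
    {A B : Set (Fin n → α)} (hA : MeasurableSet A) (hB : MeasurableSet B)
    (hAB : ∀ v : Fin n → ι, (fun i => a (v i)) ∈ A ∨ (fun i => a (v i)) ∈ B) :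
    ((∑ k, Real.sqrt (p k * q k)) ^ n) ^ 2 / 2 ≤
      ((Measure.pi fun _ : Fin n => ∑ k, ENNReal.ofReal (p k) • Measure.dirac (a k)) A).toReal
      + ((Measure.pi fun _ : Fin n => ∑ k, ENNReal.ofReal (q k) • Measure.dirac (a k)) B).toReal := by
  rw [atomic_pi_toReal p hp hp1 a hA, atomic_pi_toReal q hq hq1 a hB]
  exact test_bound p q hp hq hp1 hq1 _ _ hAB

lemma integrable_atomic (Q : ℝ≥0∞) (hQ : Q ≠ ⊤) (a : α) {g : α → ℝ} (hg : Measurable g) :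
    Integrable g (Q • Measure.dirac a) := by
  refine ⟨hg.aestronglyMeasurable, ?_⟩
  show ∫⁻ x, (‖g x‖₊ : ℝ≥0∞) ∂(Q • Measure.dirac a) < ⊤
  rw [lintegral_smul_measure, lintegral_dirac' _ hg.nnnorm.coe_nnreal_ennreal]
  exact ENNReal.mul_lt_top hQ.lt_top ENNReal.coe_lt_top

end LowerBoundAux

section LowerBoundConstr

variable [MeasurableSingletonClass X] {m : ℕ}

open scoped Classical in
/-- Prediction rule given by a sign pattern on the points `z`. -/
def patF (z : Fin m → X) (β : Fin m → Bool) : X → ℝ :=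
  fun x => 1 + ∑ i, if x = z i then sgB (β i) - 1 else 0

open scoped Classical in
lemma sum_pt_eq (z : Fin m → X) (hz : Function.Injective z) (c : Fin m → ℝ) (i₀ : Fin m) :
    (∑ i, if z i₀ = z i then c i else 0) = c i₀ := by
  rw [Finset.sum_eq_single i₀]
  · simp
  · intro j _ hj
    rw [if_neg]
    intro heq
    exact hj (hz heq).symm
  · simp

open scoped Classical in
lemma sum_pt_ne (z : Fin m → X) (c : Fin m → ℝ) {x : X} (hx : ∀ i, x ≠ z i) :
    (∑ i, if x = z i then c i else 0) = 0 := by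
  rw [Finset.sum_eq_zero]
  intro j _
  rw [if_neg (hx j)]

lemma patF_z (z : Fin m → X) (hz : Function.Injective z) (β : Fin m → Bool) (i : Fin m) :
    patF z β (z i) = sgB (β i) := by
  rw [patF, sum_pt_eq z hz _ i]; ring

lemma patF_ne (z : Fin m → X) (β : Fin m → Bool) {x : X} (hx : ∀ i, x ≠ z i) :
    patF z β x = 1 := by
  rw [patF, sum_pt_ne z _ hx]; ring

lemma patF_pm (z : Fin m → X) (hz : Function.Injective z) (β : Fin m → Bool) (x : X) :
    patF z β x = 1 ∨ patF z β x = -1 := by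
  classical
  by_cases hx : ∃ i, x = z i
  · obtain ⟨i, rfl⟩ := hx
    rw [patF_z z hz]
    exact sgB_pm _
  · push_neg at hx
    rw [patF_ne z β hx]
    left; rfl

lemma patF_meas (z : Fin m → X) (β : Fin m → Bool) : Measurable (patF z β) := by
  classical
  apply Measurable.add measurable_const
  apply Finset.measurable_sum
  intro i _
  refine Measurable.ite ?_ measurable_const measurable_const
  have : {x : X | x = z i} = {z i} := by ext x; simp
  rw [this]
  exact measurableSet_singleton _

open scoped Classical in
/-- The regression function of the construction. -/
def etaF (z : Fin m → X) (h : ℝ) (σ : Fin m → Bool) : X → ℝ :=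
  fun x => 1 + ∑ i, if x = z i then (1 + sgB (σ i) * h) / 2 - 1 else 0

lemma etaF_z (z : Fin m → X) (hz : Function.Injective z) (h : ℝ) (σ : Fin m → Bool) (i : Fin m) :
    etaF z h σ (z i) = (1 + sgB (σ i) * h) / 2 := by
  rw [etaF, sum_pt_eq z hz _ i]; ring

lemma etaF_ne (z : Fin m → X) (h : ℝ) (σ : Fin m → Bool) {x : X} (hx : ∀ i, x ≠ z i) :
    etaF z h σ x = 1 := by
  rw [etaF, sum_pt_ne z _ hx]; ring

lemma etaF_meas (z : Fin m → X) (h : ℝ) (σ : Fin m → Bool) : Measurable (etaF z h σ) := by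
  classical
  apply Measurable.add measurable_const
  apply Finset.measurable_sum
  intro i _
  refine Measurable.ite ?_ measurable_const measurable_const
  have : {x : X | x = z i} = {z i} := by ext x; simp
  rw [this]
  exact measurableSet_singleton _

lemma etaF_mem01 (z : Fin m → X) (hz : Function.Injective z) {h : ℝ} (hh0 : 0 < h) (hh1 : h < 1)
    (σ : Fin m → Bool) (x : X) : etaF z h σ x ∈ Set.Icc (0:ℝ) 1 := by
  classical
  by_cases hx : ∃ i, x = z i
  · obtain ⟨i, rfl⟩ := hx
    rw [etaF_z z hz h σ i]
    rcases sgB_pm (σ i) with h1 | h1 <;> rw [h1] <;> constructor <;> nlinarith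
  · push_neg at hx
    rw [etaF_ne z h σ hx]
    constructor <;> norm_num

lemma bayes_etaF (z : Fin m → X) (hz : Function.Injective z) {h : ℝ} (hh : 0 < h)
    (σ : Fin m → Bool) : bayes (etaF z h σ) = patF z σ := by
  classical
  funext x
  by_cases hx : ∃ i, x = z i
  · obtain ⟨i, rfl⟩ := hx
    rw [bayes, etaF_z z hz h σ i, patF_z z hz σ i]
    have : 2 * ((1 + sgB (σ i) * h) / 2) - 1 = sgB (σ i) * h := by ring
    rw [this, sgn]
    cases hσ : σ i <;> simp [sgB]
    · intro hc; linarith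
    · intro hc; linarith
  · push_neg at hx
    rw [bayes, etaF_ne z h σ hx, patF_ne z σ hx]
    norm_num [sgn]

/-- Atoms of the construction. -/
def atomPt (x₀ : X) (z : Fin m → X) : Option (Fin m × Bool) → X × ℝ :=
  fun k => k.elim (x₀, 1) fun ib => (z ib.1, sgB ib.2)

/-- Weights of the construction. -/
def atomW (m : ℕ) (w h : ℝ) (σ : Fin m → Bool) : Option (Fin m × Bool) → ℝ :=
  fun k => k.elim (1 - m * w) fun ib => w * (1 + sgB ib.2 * sgB (σ ib.1) * h) / 2

/-- The adversarial probability measure of the construction. -/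
def consM (x₀ : X) (z : Fin m → X) (w h : ℝ) (σ : Fin m → Bool) : Measure (X × ℝ) :=
  ∑ k, ENNReal.ofReal (atomW m w h σ k) • Measure.dirac (atomPt x₀ z k)

variable {w h : ℝ}

lemma atomW_nonneg (hw : 0 < w) (hmw : (m:ℝ) * w ≤ 1/8) (hh0 : 0 < h) (hh1 : h < 1)
    (σ : Fin m → Bool) (k : Option (Fin m × Bool)) : 0 ≤ atomW m w h σ k := by
  match k with
  | none => simp only [atomW, Option.elim]; linarith
  | some ib =>
      simp only [atomW, Option.elim]
      rcases sgB_pm ib.2 with h2 | h2 <;> rcases sgB_pm (σ ib.1) with h3 | h3 <;>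
        rw [h2, h3] <;> nlinarith

lemma atomW_sum (σ : Fin m → Bool) : ∑ k, atomW m w h σ k = 1 := by
  rw [Fintype.sum_option, Fintype.sum_prod_type]
  have : ∀ i : Fin m, ∑ b : Bool, atomW m w h σ (some (i, b)) = w := by
    intro i
    rw [Fintype.sum_bool]
    cases hσ : σ i <;> simp only [atomW, Option.elim, sgB, hσ] <;> norm_num <;> ring
  rw [Finset.sum_congr rfl fun i _ => this i]
  simp only [atomW, Option.elim, Finset.sum_const, Finset.card_univ, Fintype.card_fin,
    nsmul_eq_mul]
  ring

lemma atomW_ofReal_sum (hw : 0 < w) (hmw : (m:ℝ) * w ≤ 1/8) (hh0 : 0 < h) (hh1 : h < 1)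
    (σ : Fin m → Bool) : ∑ k, ENNReal.ofReal (atomW m w h σ k) = 1 := by
  rw [← ENNReal.ofReal_sum_of_nonneg (fun k _ => atomW_nonneg hw hmw hh0 hh1 σ k),
    atomW_sum, ENNReal.ofReal_one]

lemma consM_isProb (x₀ : X) (z : Fin m → X) (hw : 0 < w) (hmw : (m:ℝ) * w ≤ 1/8)
    (hh0 : 0 < h) (hh1 : h < 1) (σ : Fin m → Bool) :
    IsProbabilityMeasure (consM x₀ z w h σ) :=
  atomic_isProb _ _ (atomW_ofReal_sum hw hmw hh0 hh1 σ)

lemma sgn_meas {g : X → ℝ} (hg : Measurable g) : Measurable fun x => sgn (g x) := by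
  unfold sgn
  exact Measurable.ite (measurableSet_le measurable_const hg) measurable_const measurable_const

lemma misSet_meas {g : X → ℝ} (hg : Measurable g) :
    MeasurableSet {p : X × ℝ | p.2 ≠ sgn (g p.1)} := by
  have : {p : X × ℝ | p.2 ≠ sgn (g p.1)} = {p : X × ℝ | p.2 = sgn (g p.1)}ᶜ := by
    ext p; simp
  rw [this]
  exact (measurableSet_eq_fun measurable_snd ((sgn_meas hg).comp measurable_fst)).compl

open scoped Classical in
lemma consM_misRisk (x₀ : X) (z : Fin m → X) (hw : 0 < w) (hmw : (m:ℝ) * w ≤ 1/8)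
    (hh0 : 0 < h) (hh1 : h < 1) (σ : Fin m → Bool)
    (g : X → ℝ) (hg : Measurable g) (hgpm : ∀ x, g x = 1 ∨ g x = -1) :
    misRisk (consM x₀ z w h σ) g
      = (1 - m * w) * (if g x₀ = -1 then 1 else 0)
        + ∑ i, (w * (1 - h) / 2 + w * h * (if g (z i) = -sgB (σ i) then 1 else 0)) := by
  have hS := misSet_meas (X := X) hg
  have step1 : misRisk (consM x₀ z w h σ) g
      = ∑ k, atomW m w h σ k *
          (if (atomPt x₀ z k).2 = g ((atomPt x₀ z k).1) then 0 else 1) := by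
    rw [misRisk, misRiskE, consM, atomic_apply _ _ hS, ENNReal.toReal_sum]
    · refine Finset.sum_congr rfl fun k _ => ?_
      rw [ENNReal.toReal_mul, ENNReal.toReal_ofReal (atomW_nonneg hw hmw hh0 hh1 σ k)]
      congr 1
      by_cases hk : (atomPt x₀ z k) ∈ {p : X × ℝ | p.2 ≠ sgn (g p.1)}
      · rw [Set.indicator_of_mem hk]
        have hk' : (atomPt x₀ z k).2 ≠ g ((atomPt x₀ z k).1) := by
          simpa [sgn_pm (hgpm _)] using hk
        rw [if_neg hk']
        simp
      · rw [Set.indicator_of_notMem hk]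
        have hk' : (atomPt x₀ z k).2 = g ((atomPt x₀ z k).1) := by
          have h2 := hk
          simp only [Set.mem_setOf_eq, sgn_pm (hgpm _), not_not] at h2
          exact h2
        rw [if_pos hk']
        simp
    · intro k _
      exact ENNReal.mul_ne_top ENNReal.ofReal_ne_top (by
        by_cases hk : (atomPt x₀ z k) ∈ {p : X × ℝ | p.2 ≠ sgn (g p.1)} <;>
          simp [Set.indicator_apply, hk])
  rw [step1, Fintype.sum_option, Fintype.sum_prod_type]
  congr 1
  · -- none term
    simp only [atomPt, atomW, Option.elim]
    rcases hgpm x₀ with h1 | h1 <;> simp [h1] <;> norm_num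
  · refine Finset.sum_congr rfl fun i _ => ?_
    rw [Fintype.sum_bool]
    rcases hgpm (z i) with h1 | h1 <;> cases hσ : σ i <;>
        simp only [atomPt, atomW, Option.elim, sgB, hσ, h1] <;> norm_num <;> ring_nf <;> simp

lemma consM_labels (x₀ : X) (z : Fin m → X) (σ : Fin m → Bool) :
    consM x₀ z w h σ {p : X × ℝ | p.2 = 1 ∨ p.2 = -1}ᶜ = 0 := by
  have hS : MeasurableSet {p : X × ℝ | p.2 = 1 ∨ p.2 = -1}ᶜ := by
    refine MeasurableSet.compl (MeasurableSet.union ?_ ?_)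
    · exact measurable_snd (measurableSet_singleton (1:ℝ))
    · exact measurable_snd (measurableSet_singleton (-1:ℝ))
  rw [consM, atomic_apply _ _ hS]
  refine Finset.sum_eq_zero fun k _ => ?_
  have hmem : atomPt x₀ z k ∈ {p : X × ℝ | p.2 = 1 ∨ p.2 = -1} := by
    match k with
    | none => exact Or.inl rfl
    | some ib => exact sgB_pm ib.2
  rw [Set.indicator_of_notMem (Set.notMem_compl_iff.mpr hmem), mul_zero]

lemma consM_map_fst (x₀ : X) (z : Fin m → X) (σ : Fin m → Bool) :
    (consM x₀ z w h σ).map Prod.fst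
      = ∑ k, ENNReal.ofReal (atomW m w h σ k) • Measure.dirac ((atomPt x₀ z k).1) := by
  ext s hs
  rw [Measure.map_apply measurable_fst hs, consM, atomic_apply _ _ (measurable_fst hs),
    atomic_apply _ _ hs]
  refine Finset.sum_congr rfl fun k _ => ?_
  congr 1

lemma consM_cond (x₀ : X) (z : Fin m → X) (hz : Function.Injective z)
    (hzx : ∀ i, x₀ ≠ z i) (hw : 0 < w) (hmw : (m:ℝ) * w ≤ 1/8) (hh0 : 0 < h) (hh1 : h < 1)
    (σ : Fin m → Bool) (B : Set X) (hB : MeasurableSet B) :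
    consM x₀ z w h σ (B ×ˢ ({1} : Set ℝ))
      = ∫⁻ x in B, ENNReal.ofReal (etaF z h σ x) ∂((consM x₀ z w h σ).map Prod.fst) := by
  have hmeas : Measurable fun x => ENNReal.ofReal (etaF z h σ x) :=
    (etaF_meas z h σ).ennreal_ofReal
  rw [consM_map_fst, ← lintegral_indicator hB, lintegral_finset_sum_measure]
  have hrhs : ∀ k, ∫⁻ x, B.indicator (fun x => ENNReal.ofReal (etaF z h σ x)) x
        ∂(ENNReal.ofReal (atomW m w h σ k) • Measure.dirac ((atomPt x₀ z k).1))
      = ENNReal.ofReal (atomW m w h σ k) *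
          B.indicator (fun x => ENNReal.ofReal (etaF z h σ x)) ((atomPt x₀ z k).1) := by
    intro k
    rw [lintegral_smul_measure, lintegral_dirac' _ (hmeas.indicator hB), smul_eq_mul]
  rw [Finset.sum_congr rfl fun k _ => hrhs k]
  have hSm : MeasurableSet (B ×ˢ ({1} : Set ℝ)) := hB.prod (measurableSet_singleton 1)
  rw [consM, atomic_apply _ _ hSm]
  rw [Fintype.sum_option, Fintype.sum_option, Fintype.sum_prod_type, Fintype.sum_prod_type]
  congr 1
  · -- none
    show ENNReal.ofReal (atomW m w h σ none) * (B ×ˢ ({1} : Set ℝ)).indicator 1 (x₀, (1:ℝ))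
      = ENNReal.ofReal (atomW m w h σ none)
        * B.indicator (fun x => ENNReal.ofReal (etaF z h σ x)) x₀
    by_cases hx : x₀ ∈ B
    · rw [Set.indicator_of_mem (show ((x₀,(1:ℝ)) ∈ B ×ˢ ({1} : Set ℝ)) from ⟨hx, rfl⟩),
        Set.indicator_of_mem hx]
      simp [etaF_ne z h σ hzx]
    · rw [Set.indicator_of_notMem (fun hc => hx hc.1), Set.indicator_of_notMem hx]
  · refine Finset.sum_congr rfl fun i _ => ?_
    rw [Fintype.sum_bool, Fintype.sum_bool]
    by_cases hzB : z i ∈ B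
    · have ht : (atomPt x₀ z (some (i, true))) ∈ B ×ˢ ({1} : Set ℝ) := by
        refine ⟨hzB, ?_⟩
        show sgB true ∈ ({1} : Set ℝ)
        simp
      have hf : (atomPt x₀ z (some (i, false))) ∉ B ×ˢ ({1} : Set ℝ) := by
        intro hc
        have h2 : sgB false ∈ ({1} : Set ℝ) := hc.2
        simp only [sgB_false, Set.mem_singleton_iff] at h2
        norm_num at h2
      have hin : ∀ b : Bool, ((atomPt x₀ z (some (i, b))).1) ∈ B := by intro b; exact hzB
      rw [Set.indicator_of_mem ht, Set.indicator_of_notMem hf,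
        Set.indicator_of_mem (hin true), Set.indicator_of_mem (hin false)]
      simp only [atomPt, Option.elim, Pi.one_apply, mul_one, mul_zero, add_zero]
      rw [etaF_z z hz h σ i]
      have hW : ∀ b : Bool, atomW m w h σ (some (i, b))
          = w * (1 + sgB b * sgB (σ i) * h) / 2 := fun b => rfl
      rw [hW true, hW false]
      have e1 : 0 ≤ (1 + sgB (σ i) * h) / 2 := by
        rcases sgB_pm (σ i) with h2 | h2 <;> rw [h2] <;> nlinarith
      have e3 : 0 ≤ w * (1 + sgB true * sgB (σ i) * h) / 2 := by
        rcases sgB_pm (σ i) with h2 | h2 <;> rw [h2] <;> simp only [sgB_true, sgB_false] <;>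
          nlinarith
      have e4 : 0 ≤ w * (1 + sgB false * sgB (σ i) * h) / 2 := by
        rcases sgB_pm (σ i) with h2 | h2 <;> rw [h2] <;> simp only [sgB_true, sgB_false] <;>
          nlinarith
      rw [← ENNReal.ofReal_mul e3, ← ENNReal.ofReal_mul e4,
        ← ENNReal.ofReal_add (mul_nonneg e3 e1) (mul_nonneg e4 e1)]
      congr 1
      simp only [sgB_true, sgB_false]
      ring
    · have hf : ∀ b : Bool, (atomPt x₀ z (some (i, b))) ∉ B ×ˢ ({1} : Set ℝ) := by
        intro b hc
        exact hzB hc.1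
      have hf2 : ∀ b : Bool, ((atomPt x₀ z (some (i, b))).1) ∉ B := by
        intro b hc
        exact hzB hc
      rw [Set.indicator_of_notMem (hf true), Set.indicator_of_notMem (hf false),
        Set.indicator_of_notMem (hf2 true), Set.indicator_of_notMem (hf2 false)]

lemma consM_integral_fst (x₀ : X) (z : Fin m → X) (hw : 0 < w) (hmw : (m:ℝ) * w ≤ 1/8)
    (hh0 : 0 < h) (hh1 : h < 1) (σ : Fin m → Bool) {g : X → ℝ} (hg : Measurable g) :
    ∫ x, g x ∂((consM x₀ z w h σ).map Prod.fst)
      = ∑ k, atomW m w h σ k * g ((atomPt x₀ z k).1) := by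
  have hint := integral_finset_sum_measure (f := g)
    (μ := fun k : Option (Fin m × Bool) =>
      ENNReal.ofReal (atomW m w h σ k) • Measure.dirac ((atomPt x₀ z k).1))
    (s := Finset.univ) (fun k _ => integrable_atomic _ ENNReal.ofReal_ne_top _ hg)
  rw [consM_map_fst, hint]
  refine Finset.sum_congr rfl fun k _ => ?_
  rw [integral_smul_measure, integral_dirac' _ _ hg.stronglyMeasurable,
    ENNReal.toReal_ofReal (atomW_nonneg hw hmw hh0 hh1 σ k), smul_eq_mul]

lemma hell_pt (w h c : ℝ) (hw : 0 ≤ w) (hc : c = 1 ∨ c = -1) :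
    Real.sqrt (w * (1 + c * h) / 2 * (w * (1 + -c * h) / 2)) = w / 2 * Real.sqrt (1 - h^2) := by
  have h1 : w * (1 + c * h) / 2 * (w * (1 + -c * h) / 2) = (w/2)^2 * (1 - h^2) := by
    rcases hc with rfl | rfl <;> ring
  rw [h1, Real.sqrt_mul (sq_nonneg _), Real.sqrt_sq (by linarith)]

lemma hell_sum (hw : 0 < w) (hmw : (m:ℝ) * w ≤ 1/8) (hh0 : 0 < h) (hh1 : h < 1)
    (σ : Fin m → Bool) (i : Fin m) :
    ∑ k, Real.sqrt (atomW m w h σ k * atomW m w h (Function.update σ i (!σ i)) k)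
      = 1 - w + w * Real.sqrt (1 - h^2) := by
  classical
  rw [Fintype.sum_option, Fintype.sum_prod_type]
  have hnone : Real.sqrt (atomW m w h σ none * atomW m w h (Function.update σ i (!σ i)) none)
      = 1 - (m:ℝ) * w := by
    show Real.sqrt ((1 - (m:ℝ)*w) * (1 - (m:ℝ)*w)) = 1 - (m:ℝ)*w
    exact Real.sqrt_mul_self (by linarith)
  have hterm : ∀ j : Fin m, j ≠ i →
      (∑ b : Bool, Real.sqrt (atomW m w h σ (some (j, b))
        * atomW m w h (Function.update σ i (!σ i)) (some (j, b)))) = w := by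
    intro j hj
    have hupd : Function.update σ i (!σ i) j = σ j := Function.update_of_ne hj _ _
    have hval : ∀ b : Bool, atomW m w h (Function.update σ i (!σ i)) (some (j, b))
        = atomW m w h σ (some (j, b)) := by
      intro b
      show w * (1 + sgB b * sgB (Function.update σ i (!σ i) j) * h) / 2
        = w * (1 + sgB b * sgB (σ j) * h) / 2
      rw [hupd]
    rw [Fintype.sum_bool, hval true, hval false]
    have hs : ∀ b : Bool, Real.sqrt (atomW m w h σ (some (j, b)) * atomW m w h σ (some (j, b)))
        = atomW m w h σ (some (j, b)) := by
      intro b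
      refine Real.sqrt_mul_self ?_
      show 0 ≤ w * (1 + sgB b * sgB (σ j) * h) / 2
      rcases sgB_pm b with h1 | h1 <;> rcases sgB_pm (σ j) with h2 | h2 <;>
        rw [h1, h2] <;> nlinarith
    rw [hs true, hs false]
    show w * (1 + sgB true * sgB (σ j) * h) / 2 + w * (1 + sgB false * sgB (σ j) * h) / 2 = w
    simp only [sgB_true, sgB_false]
    ring
  have hterm_i : (∑ b : Bool, Real.sqrt (atomW m w h σ (some (i, b))
      * atomW m w h (Function.update σ i (!σ i)) (some (i, b)))) = w * Real.sqrt (1 - h^2) := by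
    have hupd : Function.update σ i (!σ i) i = !σ i := Function.update_self _ _ _
    have hval : ∀ b : Bool, Real.sqrt (atomW m w h σ (some (i, b))
        * atomW m w h (Function.update σ i (!σ i)) (some (i, b)))
        = w / 2 * Real.sqrt (1 - h^2) := by
      intro b
      have h1 : atomW m w h (Function.update σ i (!σ i)) (some (i, b))
          = w * (1 + -(sgB b * sgB (σ i)) * h) / 2 := by
        show w * (1 + sgB b * sgB (Function.update σ i (!σ i) i) * h) / 2 = _
        rw [hupd, sgB_not, mul_neg]
      rw [h1]
      have h2 : atomW m w h σ (some (i, b)) = w * (1 + sgB b * sgB (σ i) * h) / 2 := rfl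
      rw [h2]
      refine hell_pt w h (sgB b * sgB (σ i)) hw.le ?_
      rcases sgB_pm b with h3 | h3 <;> rcases sgB_pm (σ i) with h4 | h4 <;>
        rw [h3, h4] <;> norm_num
    rw [Fintype.sum_bool, hval true, hval false]
    ring
  rw [hnone]
  have hsplit : ∑ j : Fin m, (∑ b : Bool, Real.sqrt (atomW m w h σ (some (j, b))
      * atomW m w h (Function.update σ i (!σ i)) (some (j, b))))
      = ((m:ℝ) - 1) * w + w * Real.sqrt (1 - h^2) := by
    rw [← Finset.sum_erase_add _ _ (Finset.mem_univ i), hterm_i]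
    have : ∑ j ∈ Finset.univ.erase i, (∑ b : Bool, Real.sqrt (atomW m w h σ (some (j, b))
        * atomW m w h (Function.update σ i (!σ i)) (some (j, b))))
        = ((m:ℝ) - 1) * w := by
      rw [Finset.sum_congr rfl fun j hj => hterm j (Finset.ne_of_mem_erase hj)]
      rw [Finset.sum_const, Finset.card_erase_of_mem (Finset.mem_univ i), Finset.card_univ,
        Fintype.card_fin, nsmul_eq_mul]
      have hm1 : (1:ℕ) ≤ m := Nat.one_le_iff_ne_zero.mpr (by
        rintro rfl; exact absurd i.2 (by simp))
      rw [Nat.cast_sub hm1]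
      norm_num
    rw [this]
  rw [hsplit]
  ring

lemma indicator_set_meas {n : ℕ} (fbar : (Fin n → X × ℝ) → X → ℝ)
    (hfbar : Measurable (fun p : (Fin n → X × ℝ) × X => fbar p.1 p.2)) (c : X) (v : ℝ) :
    MeasurableSet {D : Fin n → X × ℝ | fbar D c = v} := by
  have hm : Measurable fun D : Fin n → X × ℝ => fbar D c :=
    hfbar.comp (measurable_id.prodMk measurable_const)
  exact hm (measurableSet_singleton v)

open scoped Classical in
lemma sample_int_lb (x₀ : X) (z : Fin m → X) (hz : Function.Injective z)
    (hzx : ∀ i, x₀ ≠ z i) (hw : 0 < w) (hmw : (m:ℝ) * w ≤ 1/8)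
    (hh0 : 0 < h) (hh1 : h < 1) (σ : Fin m → Bool) (n : ℕ)
    (fbar : (Fin n → X × ℝ) → X → ℝ)
    (hfbar : Measurable (fun p : (Fin n → X × ℝ) × X => fbar p.1 p.2))
    (hfpm : ∀ D x, fbar D x = 1 ∨ fbar D x = -1) :
    ∑ i, w * h * ((Measure.pi fun _ : Fin n => consM x₀ z w h σ)
        {D | fbar D (z i) = -sgB (σ i)}).toReal
      ≤ ∫ D, (misRisk (consM x₀ z w h σ) (fbar D)
          - misRisk (consM x₀ z w h σ) (patF z σ)) ∂(Measure.pi fun _ => consM x₀ z w h σ) := by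
  haveI := consM_isProb x₀ z hw hmw hh0 hh1 σ
  set μ := Measure.pi fun _ : Fin n => consM x₀ z w h σ with hμ
  set A0 : Set (Fin n → X × ℝ) := {D | fbar D x₀ = -1} with hA0
  set A : Fin m → Set (Fin n → X × ℝ) := fun i => {D | fbar D (z i) = -sgB (σ i)} with hA
  have hA0m : MeasurableSet A0 := indicator_set_meas fbar hfbar x₀ (-1)
  have hAm : ∀ i, MeasurableSet (A i) := fun i => indicator_set_meas fbar hfbar (z i) _
  have hmispat : misRisk (consM x₀ z w h σ) (patF z σ) = ∑ _i : Fin m, w * (1 - h) / 2 := by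
    rw [consM_misRisk x₀ z hw hmw hh0 hh1 σ _ (patF_meas z σ) (patF_pm z hz σ)]
    have h0 : patF z σ x₀ = 1 := patF_ne z σ hzx
    rw [h0]
    have hterm : ∀ i : Fin m, w * (1 - h) / 2 + w * h *
        (if patF z σ (z i) = -sgB (σ i) then 1 else 0) = w * (1 - h) / 2 := by
      intro i
      rw [patF_z z hz σ i, if_neg, mul_zero, add_zero]
      rcases sgB_pm (σ i) with h1 | h1 <;> rw [h1] <;> norm_num
    rw [Finset.sum_congr rfl fun i _ => hterm i]
    norm_num
  have hcong : ∀ D, misRisk (consM x₀ z w h σ) (fbar D)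
      - misRisk (consM x₀ z w h σ) (patF z σ)
      = A0.indicator (fun _ => 1 - (m:ℝ) * w) D + ∑ i, (A i).indicator (fun _ => w * h) D := by
    intro D
    have hgD : Measurable (fbar D) := hfbar.comp (measurable_const.prodMk measurable_id)
    rw [consM_misRisk x₀ z hw hmw hh0 hh1 σ _ hgD (hfpm D), hmispat]
    have hterm : ∀ i : Fin m, (w * (1 - h) / 2 + w * h *
        (if fbar D (z i) = -sgB (σ i) then 1 else 0)) - w * (1 - h) / 2
        = (A i).indicator (fun _ => w * h) D := by
      intro i
      by_cases hD : D ∈ A i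
      · have hD' : fbar D (z i) = -sgB (σ i) := hD
        rw [Set.indicator_of_mem hD, if_pos hD']
        ring
      · have hD' : ¬ fbar D (z i) = -sgB (σ i) := hD
        rw [Set.indicator_of_notMem hD, if_neg hD']
        ring
    have hsum : ∑ i : Fin m, (w * (1 - h) / 2 + w * h *
          (if fbar D (z i) = -sgB (σ i) then 1 else 0))
        - ∑ _i : Fin m, w * (1 - h) / 2
        = ∑ i : Fin m, (A i).indicator (fun _ => w * h) D := by
      rw [← Finset.sum_sub_distrib]
      exact Finset.sum_congr rfl fun i _ => hterm i
    have hA0' : (1 - (m:ℝ)*w) * (if fbar D x₀ = -1 then 1 else 0)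
        = A0.indicator (fun _ => 1 - (m:ℝ)*w) D := by
      by_cases hD : D ∈ A0
      · have hD' : fbar D x₀ = -1 := hD
        rw [Set.indicator_of_mem hD, if_pos hD', mul_one]
      · have hD' : ¬ fbar D x₀ = -1 := hD
        rw [Set.indicator_of_notMem hD, if_neg hD', mul_zero]
    linarith [hsum, hA0']
  rw [integral_congr_ae (Filter.EventuallyEq.of_eq (funext hcong))]
  have hint0 : Integrable (A0.indicator (fun _ => 1 - (m:ℝ) * w)) μ :=
    (integrable_const _).indicator hA0m
  have hinti : ∀ i : Fin m, Integrable ((A i).indicator (fun _ => w * h)) μ :=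
    fun i => (integrable_const _).indicator (hAm i)
  rw [integral_add hint0 (integrable_finset_sum _ fun i _ => hinti i),
    integral_finset_sum _ fun i _ => hinti i]
  have h1 : ∫ D, A0.indicator (fun _ => 1 - (m:ℝ) * w) D ∂μ = (μ A0).toReal • (1 - (m:ℝ)*w) :=
    integral_indicator_const _ hA0m
  have h2 : ∀ i : Fin m, ∫ D, (A i).indicator (fun _ => w * h) D ∂μ
      = (μ (A i)).toReal • (w*h) :=
    fun i => integral_indicator_const _ (hAm i)
  rw [h1, Finset.sum_congr rfl fun i _ => h2 i]
  have h3 : ∑ i : Fin m, w * h * (μ (A i)).toReal = ∑ i : Fin m, (μ (A i)).toReal • (w*h) := by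
    refine Finset.sum_congr rfl fun i _ => ?_
    rw [smul_eq_mul]
    ring
  rw [← h3]
  have h4 : 0 ≤ (μ A0).toReal • (1 - (m:ℝ)*w) := by
    rw [smul_eq_mul]
    exact mul_nonneg ENNReal.toReal_nonneg (by linarith)
  linarith

lemma alpha_pow_bound (hw : 0 < w) (hw1 : w ≤ 1) (hh0 : 0 < h) (hh1 : h < 1) (n : ℕ)
    (hn : (n:ℝ) * (w * h^2) ≤ 1/4) :
    (1:ℝ)/4 ≤ ((1 - w + w * Real.sqrt (1 - h^2)) ^ n) ^ 2 / 2 := by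
  have hh2 : 0 ≤ 1 - h^2 := by nlinarith
  have hs : 1 - h^2 ≤ Real.sqrt (1 - h^2) := by
    have h1 : Real.sqrt ((1 - h^2)^2) ≤ Real.sqrt (1 - h^2) := by
      apply Real.sqrt_le_sqrt
      nlinarith
    rwa [Real.sqrt_sq hh2] at h1
  have hwh : 0 ≤ 1 - w * h^2 := by nlinarith
  have hα : 1 - w * h^2 ≤ 1 - w + w * Real.sqrt (1 - h^2) := by nlinarith
  have h4 : 1 - (n:ℝ) * (w * h^2) ≤ (1 - w * h^2) ^ n := by
    have := one_add_mul_le_pow (a := -(w * h^2)) (by nlinarith) n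
    calc 1 - (n:ℝ) * (w * h^2) = 1 + (n:ℝ) * (-(w * h^2)) := by ring
      _ ≤ (1 + -(w * h^2)) ^ n := this
      _ = (1 - w * h^2) ^ n := by ring_nf
  have h5 : (1 - w * h^2) ^ n ≤ (1 - w + w * Real.sqrt (1 - h^2)) ^ n :=
    pow_le_pow_left₀ hwh hα n
  have h6 : (3:ℝ)/4 ≤ (1 - w + w * Real.sqrt (1 - h^2)) ^ n := by
    calc (3:ℝ)/4 ≤ 1 - (n:ℝ) * (w * h^2) := by linarith
      _ ≤ _ := le_trans h4 h5
  have h7 : ((3:ℝ)/4)^2 ≤ ((1 - w + w * Real.sqrt (1 - h^2)) ^ n) ^ 2 :=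
    pow_le_pow_left₀ (by norm_num) h6 2
  nlinarith

open scoped Classical in
lemma pair_bound_consM (x₀ : X) (z : Fin m → X) (hw : 0 < w) (hmw : (m:ℝ) * w ≤ 1/8)
    (hh0 : 0 < h) (hh1 : h < 1) (n : ℕ)
    (fbar : (Fin n → X × ℝ) → X → ℝ)
    (hfbar : Measurable (fun p : (Fin n → X × ℝ) × X => fbar p.1 p.2))
    (hfpm : ∀ D x, fbar D x = 1 ∨ fbar D x = -1) (σ : Fin m → Bool) (i : Fin m) :
    ((1 - w + w * Real.sqrt (1 - h^2)) ^ n) ^ 2 / 2 ≤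
      ((Measure.pi fun _ : Fin n => consM x₀ z w h σ)
          {D | fbar D (z i) = -sgB (σ i)}).toReal
      + ((Measure.pi fun _ : Fin n => consM x₀ z w h (Function.update σ i (!σ i)))
          {D | fbar D (z i) = -sgB (Function.update σ i (!σ i) i)}).toReal := by
  set σ' := Function.update σ i (!σ i) with hσ'
  have hcov : ∀ v : Fin n → Option (Fin m × Bool),
      (fun j => atomPt x₀ z (v j)) ∈ {D : Fin n → X × ℝ | fbar D (z i) = -sgB (σ i)}
      ∨ (fun j => atomPt x₀ z (v j)) ∈ {D : Fin n → X × ℝ | fbar D (z i) = -sgB (σ' i)} := by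
    intro v
    have hval : sgB (σ' i) = -sgB (σ i) := by
      rw [hσ', Function.update_self, sgB_not]
    rcases hfpm (fun j => atomPt x₀ z (v j)) (z i) with h1 | h1 <;>
      rcases sgB_pm (σ i) with h2 | h2 <;> simp [h1, h2, hval]
  have := measure_pair_bound (n := n) (atomW m w h σ) (atomW m w h σ')
    (atomW_nonneg hw hmw hh0 hh1 σ) (atomW_nonneg hw hmw hh0 hh1 σ')
    (atomW_sum σ) (atomW_sum σ') (atomPt x₀ z)
    (indicator_set_meas fbar hfbar (z i) (-sgB (σ i)))
    (indicator_set_meas fbar hfbar (z i) (-sgB (σ' i))) hcov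
  rw [hell_sum hw hmw hh0 hh1 σ i] at this
  simpa [consM] using this

open scoped Classical in
lemma exists_good_sigma (x₀ : X) (z : Fin m → X) (hw : 0 < w) (hmw : (m:ℝ) * w ≤ 1/8)
    (hw1 : w ≤ 1) (hh0 : 0 < h) (hh1 : h < 1) (n : ℕ)
    (hn4 : (n:ℝ) * (w * h^2) ≤ 1/4)
    (fbar : (Fin n → X × ℝ) → X → ℝ)
    (hfbar : Measurable (fun p : (Fin n → X × ℝ) × X => fbar p.1 p.2))
    (hfpm : ∀ D x, fbar D x = 1 ∨ fbar D x = -1) :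
    ∃ σ : Fin m → Bool, (m:ℝ) * w * h / 8
      ≤ ∑ i, w * h * ((Measure.pi fun _ : Fin n => consM x₀ z w h σ)
          {D | fbar D (z i) = -sgB (σ i)}).toReal := by
  set P : (Fin m → Bool) → Fin m → ℝ := fun σ i =>
    ((Measure.pi fun _ : Fin n => consM x₀ z w h σ)
      {D | fbar D (z i) = -sgB (σ i)}).toReal with hP
  have hpair : ∀ (σ : Fin m → Bool) (i : Fin m),
      1/4 ≤ P σ i + P (Function.update σ i (!σ i)) i := by
    intro σ i
    calc (1:ℝ)/4 ≤ ((1 - w + w * Real.sqrt (1 - h^2)) ^ n) ^ 2 / 2 :=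
          alpha_pow_bound hw hw1 hh0 hh1 n hn4
      _ ≤ _ := pair_bound_consM x₀ z hw hmw hh0 hh1 n fbar hfbar hfpm σ i
  have hflip : ∀ i : Fin m, ∑ σ : Fin m → Bool, P σ i
      = ∑ σ : Fin m → Bool, P (Function.update σ i (!σ i)) i := by
    intro i
    have hinv : Function.Involutive (fun σ : Fin m → Bool => Function.update σ i (!σ i)) := by
      intro σ
      simp only [Function.update_self]
      rw [Function.update_idem, Bool.not_not, Function.update_eq_self]
    exact Fintype.sum_equiv hinv.toPerm _ _ (fun σ => rfl) |>.symm
  have hsum_i : ∀ i : Fin m, (2^m : ℝ) / 8 ≤ ∑ σ : Fin m → Bool, P σ i := by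
    intro i
    have h2 : 2 * ∑ σ : Fin m → Bool, P σ i
        = ∑ σ : Fin m → Bool, (P σ i + P (Function.update σ i (!σ i)) i) := by
      rw [Finset.sum_add_distrib, ← hflip i]
      ring
    have h3 : (2^m : ℝ) * (1/4)
        ≤ ∑ σ : Fin m → Bool, (P σ i + P (Function.update σ i (!σ i)) i) := by
      calc (2^m : ℝ) * (1/4)
          = ∑ _σ : Fin m → Bool, (1:ℝ)/4 := by
            rw [Finset.sum_const, Finset.card_univ]
            simp [Fintype.card_fun]
      _ ≤ _ := Finset.sum_le_sum fun σ _ => hpair σ i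
    linarith
  have htot : (2^m : ℝ) * ((m:ℝ) * w * h / 8)
      ≤ ∑ σ : Fin m → Bool, ∑ i, w * h * P σ i := by
    rw [Finset.sum_comm]
    have hwh : 0 ≤ w * h := by positivity
    have hi : ∀ i : Fin m, (2^m : ℝ) * (w * h) / 8 ≤ ∑ σ : Fin m → Bool, w * h * P σ i := by
      intro i
      rw [← Finset.mul_sum]
      calc (2^m : ℝ) * (w * h) / 8 = (w*h) * ((2^m : ℝ)/8) := by ring
        _ ≤ (w*h) * ∑ σ : Fin m → Bool, P σ i :=
            mul_le_mul_of_nonneg_left (hsum_i i) hwh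
    calc (2^m : ℝ) * ((m:ℝ) * w * h / 8) = ∑ _i : Fin m, (2^m : ℝ) * (w * h) / 8 := by
          rw [Finset.sum_const, Finset.card_univ, Fintype.card_fin, nsmul_eq_mul]
          ring
      _ ≤ _ := Finset.sum_le_sum fun i _ => hi i
  have hex := Finset.exists_le_of_sum_le (f := fun _ : Fin m → Bool => (m:ℝ) * w * h / 8)
    (g := fun σ => ∑ i, w * h * P σ i) (s := Finset.univ)
    ⟨Classical.arbitrary _, Finset.mem_univ _⟩ (by
      rw [Finset.sum_const, Finset.card_univ]
      simpa [Fintype.card_fun] using htot)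
  obtain ⟨σ, _, hσ⟩ := hex
  exact ⟨σ, hσ⟩

open scoped Classical in
lemma consM_excess (x₀ : X) (z : Fin m → X) (hz : Function.Injective z)
    (hzx : ∀ i, x₀ ≠ z i) (hw : 0 < w) (hmw : (m:ℝ) * w ≤ 1/8)
    (hh0 : 0 < h) (hh1 : h < 1) (σ : Fin m → Bool)
    (g : X → ℝ) (hg : Measurable g) (hgpm : ∀ x, g x = 1 ∨ g x = -1) :
    misRisk (consM x₀ z w h σ) g - misRisk (consM x₀ z w h σ) (patF z σ)
      = (1 - m * w) * (if g x₀ = -1 then 1 else 0)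
        + ∑ i, w * h * (if g (z i) = -sgB (σ i) then 1 else 0) := by
  have hmispat : misRisk (consM x₀ z w h σ) (patF z σ) = ∑ _i : Fin m, w * (1 - h) / 2 := by
    rw [consM_misRisk x₀ z hw hmw hh0 hh1 σ _ (patF_meas z σ) (patF_pm z hz σ)]
    have h0 : patF z σ x₀ = 1 := patF_ne z σ hzx
    rw [h0]
    have hterm : ∀ i : Fin m, w * (1 - h) / 2 + w * h *
        (if patF z σ (z i) = -sgB (σ i) then 1 else 0) = w * (1 - h) / 2 := by
      intro i
      rw [patF_z z hz σ i, if_neg, mul_zero, add_zero]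
      rcases sgB_pm (σ i) with h1 | h1 <;> rw [h1] <;> norm_num
    rw [Finset.sum_congr rfl fun i _ => hterm i]
    norm_num
  rw [consM_misRisk x₀ z hw hmw hh0 hh1 σ _ hg hgpm, hmispat]
  have : ∑ i : Fin m, (w * (1 - h) / 2 + w * h * (if g (z i) = -sgB (σ i) then 1 else 0))
      - ∑ _i : Fin m, w * (1 - h) / 2
      = ∑ i : Fin m, w * h * (if g (z i) = -sgB (σ i) then 1 else 0) := by
    rw [← Finset.sum_sub_distrib]
    refine Finset.sum_congr rfl fun i _ => ?_
    ring
  linarith [this]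

open scoped Classical in
lemma consM_excess_nonneg (x₀ : X) (z : Fin m → X) (hz : Function.Injective z)
    (hzx : ∀ i, x₀ ≠ z i) (hw : 0 < w) (hmw : (m:ℝ) * w ≤ 1/8)
    (hh0 : 0 < h) (hh1 : h < 1) (σ : Fin m → Bool)
    (g : X → ℝ) (hg : Measurable g) (hgpm : ∀ x, g x = 1 ∨ g x = -1) :
    0 ≤ misRisk (consM x₀ z w h σ) g - misRisk (consM x₀ z w h σ) (patF z σ) := by
  rw [consM_excess x₀ z hz hzx hw hmw hh0 hh1 σ g hg hgpm]
  have h1 : (0:ℝ) ≤ (1 - m * w) * (if g x₀ = -1 then 1 else 0) := by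
    apply mul_nonneg (by linarith)
    split <;> norm_num
  have h2 : (0:ℝ) ≤ ∑ i, w * h * (if g (z i) = -sgB (σ i) then 1 else 0) :=
    Finset.sum_nonneg fun i _ => mul_nonneg (by positivity) (by split <;> norm_num)
  linarith

open scoped Classical in
lemma consM_MA (x₀ : X) (z : Fin m → X) (hz : Function.Injective z)
    (hzx : ∀ i, x₀ ≠ z i) (hm1 : 1 ≤ m) (hw : 0 < w) (hmw : (m:ℝ) * w ≤ 1/8)
    (hh0 : 0 < h) (hh1 : h < 1) (σ : Fin m → Bool) {κ : ℝ} (hκ : 1 ≤ κ)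
    (hbay : bayes (etaF z h σ) = patF z σ) :
    ∃ c₀ > 0, MA (consM x₀ z w h σ) (etaF z h σ) κ c₀ := by
  have hwh : 0 < w * h := by positivity
  have hκ0 : 0 < 1 / κ := by positivity
  have hrp : 0 < (w * h) ^ ((1:ℝ)/κ) := Real.rpow_pos_of_pos hwh _
  refine ⟨2 / (w * h) ^ ((1:ℝ)/κ), by positivity, ?_⟩
  intro f hf hfpm
  rw [hbay]
  have habs : Measurable fun x => |f x - patF z σ x| := (hf.sub (patF_meas z σ)).abs
  rw [consM_integral_fst x₀ z hw hmw hh0 hh1 σ habs]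
  have hexc := consM_excess x₀ z hz hzx hw hmw hh0 hh1 σ f hf hfpm
  have hexc0 := consM_excess_nonneg x₀ z hz hzx hw hmw hh0 hh1 σ f hf hfpm
  by_cases hagree : f x₀ = patF z σ x₀ ∧ ∀ i, f (z i) = patF z σ (z i)
  · have hzero : ∀ k,
        atomW m w h σ k * |f ((atomPt x₀ z k).1) - patF z σ ((atomPt x₀ z k).1)| = 0 := by
      intro k
      match k with
      | none =>
          show atomW m w h σ none * |f x₀ - patF z σ x₀| = 0
          rw [hagree.1, sub_self, abs_zero, mul_zero]
      | some ib =>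
          show atomW m w h σ (some ib) * |f (z ib.1) - patF z σ (z ib.1)| = 0
          rw [hagree.2 ib.1, sub_self, abs_zero, mul_zero]
    rw [Finset.sum_congr rfl fun k _ => hzero k, Finset.sum_const, smul_zero]
    positivity
  · have hlb : w * h ≤ misRisk (consM x₀ z w h σ) f - misRisk (consM x₀ z w h σ) (patF z σ) := by
      rw [hexc]
      have h2 : (0:ℝ) ≤ ∑ i, w * h * (if f (z i) = -sgB (σ i) then 1 else 0) :=
        Finset.sum_nonneg fun i _ => mul_nonneg hwh.le (by split <;> norm_num)
      rw [not_and_or] at hagree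
      rcases hagree with hx0 | hzi
      · have hfx : f x₀ = -1 := by
          rcases hfpm x₀ with h1 | h1
          · exact absurd (h1.trans (patF_ne z σ hzx).symm) hx0
          · exact h1
        rw [if_pos hfx, mul_one]
        have hm1' : (1:ℝ) ≤ (m:ℝ) := by exact_mod_cast hm1
        have hw8 : w ≤ 1/8 := by nlinarith [mul_nonneg (sub_nonneg.mpr hm1') hw.le]
        have hwhw : w * h ≤ w := mul_le_of_le_one_right hw.le hh1.le
        have : w * h ≤ 1 - (m:ℝ) * w := by linarith
        linarith
      · push_neg at hzi
        obtain ⟨i, hi⟩ := hzi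
        have hfi : f (z i) = -sgB (σ i) := by
          rw [patF_z z hz σ i] at hi
          rcases hfpm (z i) with h1 | h1 <;> rcases sgB_pm (σ i) with h2 | h2 <;>
            rw [h1, h2] <;> rw [h1, h2] at hi <;>
            first | rfl | (exact absurd rfl hi) | norm_num
        have hsplit : ∑ i', w * h * (if f (z i') = -sgB (σ i') then 1 else 0)
            ≥ w * h * (if f (z i) = -sgB (σ i) then 1 else 0) := by
          apply Finset.single_le_sum
            (f := fun i' => w * h * (if f (z i') = -sgB (σ i') then 1 else 0))
            (fun i' _ => mul_nonneg hwh.le (by split <;> norm_num)) (Finset.mem_univ i)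
        rw [if_pos hfi, mul_one] at hsplit
        have h1 : (0:ℝ) ≤ (1 - m * w) * (if f x₀ = -1 then 1 else 0) := by
          apply mul_nonneg (by linarith)
          split <;> norm_num
        linarith
    have hLHS : ∑ k, atomW m w h σ k
        * |f ((atomPt x₀ z k).1) - patF z σ ((atomPt x₀ z k).1)| ≤ 2 := by
      have hbd : ∀ k, atomW m w h σ k * |f ((atomPt x₀ z k).1) - patF z σ ((atomPt x₀ z k).1)|
          ≤ atomW m w h σ k * 2 := by
        intro k
        apply mul_le_mul_of_nonneg_left _ (atomW_nonneg hw hmw hh0 hh1 σ k)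
        rcases hfpm ((atomPt x₀ z k).1) with h1 | h1 <;>
          rcases patF_pm z hz σ ((atomPt x₀ z k).1) with h2 | h2 <;>
          rw [h1, h2] <;> norm_num
      calc ∑ k, atomW m w h σ k * |f ((atomPt x₀ z k).1) - patF z σ ((atomPt x₀ z k).1)|
          ≤ ∑ k, atomW m w h σ k * 2 := Finset.sum_le_sum fun k _ => hbd k
        _ = 2 := by
            rw [← Finset.sum_mul, atomW_sum]
            norm_num
    calc ∑ k, atomW m w h σ k * |f ((atomPt x₀ z k).1) - patF z σ ((atomPt x₀ z k).1)|
        ≤ 2 := hLHS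
      _ = 2 / (w * h) ^ ((1:ℝ)/κ) * (w * h) ^ ((1:ℝ)/κ) := by
          field_simp
      _ ≤ 2 / (w * h) ^ ((1:ℝ)/κ) *
            (misRisk (consM x₀ z w h σ) f - misRisk (consM x₀ z w h σ) (patF z σ)) ^ ((1:ℝ)/κ) := by
          apply mul_le_mul_of_nonneg_left _ (by positivity)
          exact Real.rpow_le_rpow hwh.le hlb hκ0.le

end LowerBoundConstr

/-- Corollary 1, lower bound: lower bound with oracle factor 2(1+a) for
the excess Bayes risk; the constant C(a) > 0 depends only on a and κ. -/
theorem lower_bound_bayes_aggregation_factor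
    {X : Type*} [MeasurableSpace X] [MeasurableSingletonClass X] [Infinite X]
    (κ : ℝ) (hκ : 1 ≤ κ) (a : ℝ) (ha : 0 < a) :
    ∃ Ca : ℝ, 0 < Ca ∧
      ∀ M n : ℕ, 3 ≤ M → 2 * Real.logb 2 M ≤ n →
      ∃ f : Fin M → X → ℝ, (∀ j, Measurable (f j)) ∧ (∀ j x, f j x = 1 ∨ f j x = -1) ∧
        ∀ fbar : (Fin n → X × ℝ) → X → ℝ,
          Measurable (fun p : (Fin n → X × ℝ) × X => fbar p.1 p.2) →
          (∀ D x, fbar D x = 1 ∨ fbar D x = -1) →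
          ∃ (π : Measure (X × ℝ)) (η : X → ℝ) (_ : IsProbabilityMeasure π),
            IsClassif π η ∧ (∃ c₀ > 0, MA π η κ c₀) ∧
            2 * (1 + a) * (⨅ j, (misRisk π (f j) - misRisk π (bayes η)))
              + Ca * (Real.log M / n) ^ (κ / (2 * κ - 1))
              ≤ ∫ D, (misRisk π (fbar D) - misRisk π (bayes η)) ∂(sample π n) := by
  classical
  refine ⟨1/64, by norm_num, ?_⟩
  intro M n hM hn
  -- the number of support points
  set m := Nat.log 2 M with hmdef
  have hm1 : 1 ≤ m := Nat.log_pos (by norm_num) (by omega)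
  have hpow : 2 ^ m ≤ M := Nat.pow_log_le_self 2 (by omega)
  have hm2 : M < 2 ^ (2*m) :=
    lt_of_lt_of_le (Nat.lt_pow_succ_log_self (by norm_num) M)
      (Nat.pow_le_pow_right (by norm_num) (by omega))
  -- the support points
  let e : ℕ ↪ X := Infinite.natEmbedding X
  set x₀ : X := e 0 with hx₀def
  set z : Fin m → X := fun i => e (i.1 + 1) with hzdef
  have hzinj : Function.Injective z := by
    intro i j hij
    have := e.injective hij
    ext
    omega
  have hzx : ∀ i, x₀ ≠ z i := by
    intro i hEq
    have := e.injective hEq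
    omega
  -- numeric facts
  have hM1 : (1:ℝ) < (M:ℝ) := by exact_mod_cast (by omega : 1 < M)
  have hM2 : (2:ℝ) ≤ (M:ℝ) := by exact_mod_cast (by omega : 2 ≤ M)
  have hlogM : 0 < Real.log M := Real.log_pos hM1
  have hlog2 : 0 < Real.log 2 := Real.log_pos (by norm_num)
  have hlogb1 : (1:ℝ) ≤ Real.logb 2 M := by
    rw [Real.logb, le_div_iff₀ hlog2, one_mul]
    exact Real.log_le_log (by norm_num) hM2
  have hn2 : (2:ℝ) ≤ (n:ℝ) := le_trans (by linarith) hn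
  have hn0 : (0:ℝ) < (n:ℝ) := by linarith
  have hlogn : 2 * Real.log M ≤ (n:ℝ) * Real.log 2 := by
    have h1 : 2 * (Real.log M / Real.log 2) ≤ (n:ℝ) := by
      rw [Real.logb] at hn
      exact hn
    have h2 : 2 * Real.log M / Real.log 2 ≤ (n:ℝ) := by
      calc 2 * Real.log M / Real.log 2 = 2 * (Real.log M / Real.log 2) := by ring
        _ ≤ (n:ℝ) := h1
    calc 2 * Real.log M = (2 * Real.log M / Real.log 2) * Real.log 2 := by
          field_simp
      _ ≤ (n:ℝ) * Real.log 2 := mul_le_mul_of_nonneg_right h2 hlog2.le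
  have hb0 : 0 < Real.log M / (n:ℝ) := by positivity
  have hlog2lt : Real.log 2 < 0.6931471808 := Real.log_two_lt_d9
  have hb1 : Real.log M / (n:ℝ) < 1 := by
    rw [div_lt_one hn0]
    nlinarith
  set b : ℝ := Real.log M / (n:ℝ) with hbdef
  set h : ℝ := b ^ (κ / (2*κ - 1)) with hhdef
  have hden : 0 < 2*κ - 1 := by linarith
  have hepos : 0 < κ / (2*κ-1) := by positivity
  have hh0 : 0 < h := Real.rpow_pos_of_pos hb0 _
  have hh1 : h < 1 := Real.rpow_lt_one hb0.le hb1 hepos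
  have h2e : 1 ≤ 2 * (κ / (2*κ-1)) := by
    rw [← mul_div_assoc, le_div_iff₀ hden]
    linarith
  have hhsq : (n:ℝ) * h^2 ≤ Real.log M := by
    have hsq : h^2 = b ^ (2 * (κ / (2*κ-1))) := by
      rw [hhdef, sq, ← Real.rpow_add hb0]
      congr 1
      ring
    have hle : b ^ (2 * (κ / (2*κ-1))) ≤ b ^ (1:ℝ) :=
      Real.rpow_le_rpow_of_exponent_ge hb0 hb1.le h2e
    rw [Real.rpow_one] at hle
    have : h^2 ≤ b := by rw [hsq]; exact hle
    calc (n:ℝ) * h^2 ≤ (n:ℝ) * b := mul_le_mul_of_nonneg_left this hn0.le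
      _ = Real.log M := by rw [hbdef]; field_simp
  set w : ℝ := 1/(8*(m:ℝ)) with hwdef
  have hmpos : 0 < (m:ℝ) := by exact_mod_cast hm1
  have hw : 0 < w := by rw [hwdef]; positivity
  have hm1' : (1:ℝ) ≤ (m:ℝ) := by exact_mod_cast hm1
  have hmw : (m:ℝ)*w = 1/8 := by rw [hwdef]; field_simp
  have hmw' : (m:ℝ)*w ≤ 1/8 := le_of_eq hmw
  have hw1 : w ≤ 1 := by
    rw [hwdef]
    rw [div_le_one (by positivity)]
    linarith
  have hlog2m : Real.log M ≤ 2 * (m:ℝ) * Real.log 2 := by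
    have h1 : (M:ℝ) ≤ (2:ℝ)^(2*m) := by exact_mod_cast hm2.le
    calc Real.log M ≤ Real.log ((2:ℝ)^(2*m)) := Real.log_le_log (by positivity) h1
      _ = 2 * (m:ℝ) * Real.log 2 := by
          rw [Real.log_pow]
          push_cast
          ring
  have hnwh : (n:ℝ) * (w * h^2) ≤ 1/4 := by
    have h2 : ((n:ℝ)*h^2) * w ≤ Real.log M * w := mul_le_mul_of_nonneg_right hhsq hw.le
    have h3 : Real.log M * w ≤ (2*(m:ℝ)*Real.log 2) * w := mul_le_mul_of_nonneg_right hlog2m hw.le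
    have h4 : (2*(m:ℝ)*Real.log 2) * w = Real.log 2 / 4 := by
      rw [hwdef]
      field_simp
      ring
    nlinarith
  -- the family of prediction rules
  have hcard : Fintype.card (Fin m → Bool) = 2^m := by
    simp [Fintype.card_fun]
  let E : (Fin m → Bool) ≃ Fin (2^m) := Fintype.equivFinOfCardEq hcard
  set pat : Fin M → (Fin m → Bool) :=
    fun j => if hj : (j:ℕ) < 2^m then E.symm ⟨j, hj⟩ else fun _ => true with hpatdef
  have hpatsurj : ∀ β : Fin m → Bool, ∃ j : Fin M, pat j = β := by
    intro β
    have hlt : ((E β : ℕ)) < 2^m := (E β).2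
    refine ⟨⟨(E β : ℕ), lt_of_lt_of_le hlt hpow⟩, ?_⟩
    have hj : ((⟨(E β : ℕ), lt_of_lt_of_le hlt hpow⟩ : Fin M) : ℕ) < 2^m := hlt
    rw [hpatdef]
    simp only [dif_pos hj]
    have hfin : (⟨((⟨(E β : ℕ), lt_of_lt_of_le hlt hpow⟩ : Fin M) : ℕ), hj⟩ : Fin (2^m)) = E β :=
      Fin.ext rfl
    rw [hfin, Equiv.symm_apply_apply]
  refine ⟨fun j => patF z (pat j), fun j => patF_meas z (pat j),
    fun j x => patF_pm z hzinj (pat j) x, ?_⟩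
  intro fbar hfbar hfpm
  obtain ⟨σ, hσ⟩ := exists_good_sigma x₀ z hw hmw' hw1 hh0 hh1 n hnwh fbar hfbar hfpm
  haveI hprob : IsProbabilityMeasure (consM x₀ z w h σ) := consM_isProb x₀ z hw hmw' hh0 hh1 σ
  have hbay : bayes (etaF z h σ) = patF z σ := bayes_etaF z hzinj hh0 σ
  refine ⟨consM x₀ z w h σ, etaF z h σ, hprob, ?_, ?_, ?_⟩
  · exact ⟨consM_labels x₀ z σ, etaF_meas z h σ, etaF_mem01 z hzinj hh0 hh1 σ,
      fun B hB => consM_cond x₀ z hzinj hzx hw hmw' hh0 hh1 σ B hB⟩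
  · exact consM_MA x₀ z hzinj hzx hm1 hw hmw' hh0 hh1 σ hκ hbay
  · -- the main inequality
    haveI : Nonempty (Fin M) := ⟨⟨0, by omega⟩⟩
    have hinf : (⨅ j, (misRisk (consM x₀ z w h σ) (patF z (pat j))
        - misRisk (consM x₀ z w h σ) (bayes (etaF z h σ)))) = 0 := by
      rw [hbay]
      obtain ⟨j₀, hj₀⟩ := hpatsurj σ
      apply le_antisymm
      · have hval : misRisk (consM x₀ z w h σ) (patF z (pat j₀))
            - misRisk (consM x₀ z w h σ) (patF z σ) = 0 := by
          rw [hj₀, sub_self]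
        calc (⨅ j, (misRisk (consM x₀ z w h σ) (patF z (pat j))
              - misRisk (consM x₀ z w h σ) (patF z σ)))
            ≤ misRisk (consM x₀ z w h σ) (patF z (pat j₀))
              - misRisk (consM x₀ z w h σ) (patF z σ) :=
              ciInf_le (Finite.bddBelow_range _) j₀
          _ = 0 := hval
      · apply le_ciInf
        intro j
        exact consM_excess_nonneg x₀ z hzinj hzx hw hmw' hh0 hh1 σ (patF z (pat j))
          (patF_meas z (pat j)) (patF_pm z hzinj (pat j))
    have hsample : sample (consM x₀ z w h σ) n = Measure.pi fun _ => consM x₀ z w h σ := rfl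
    rw [hinf, hsample, hbay, mul_zero, zero_add]
    have hlbint := sample_int_lb x₀ z hzinj hzx hw hmw' hh0 hh1 σ n fbar hfbar hfpm
    have hval : (1:ℝ)/64 * h = (m:ℝ) * w * h / 8 := by
      rw [hmw]
      ring
    calc (1:ℝ)/64 * b ^ (κ / (2*κ - 1)) = (1:ℝ)/64 * h := by rw [hhdef]
      _ = (m:ℝ) * w * h / 8 := hval
      _ ≤ ∑ i, w * h * ((Measure.pi fun _ : Fin n => consM x₀ z w h σ)
            {D | fbar D (z i) = -sgB (σ i)}).toReal := hσ
      _ ≤ _ := hlbint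


end AggClass
end
end

section
/- (Relative deviation inequality) Let κ ≥ 1 and let π satisfy MAH(κ) with constant c > 0. Let ℱ = {f₁,…,f_M} be measurable functions from 𝒳 to [−1,1] and let D_n be an i.i.d. sample of size n from π. For f ∈ ℱ and x > 0 set Z_x(f) = [A(f) − A_n(f) − (A(f*) − A_n(f*))] / (A(f) − A* + x). Then for all t, x > 0 and all n ≥ 1, P[ max_{f∈ℱ} Z_x(f) > t ] ≤ M[ (1 + 8c x^{1/κ}/(n(tx)²)) exp(−n(tx)²/(8c x^{1/κ})) + (1 + 16/(3ntx)) exp(−3ntx/16) ]. -/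
set_option maxHeartbeats 1000000


open MeasureTheory
open scoped ENNReal NNReal

noncomputable section

namespace AggClass

variable {X : Type*} [MeasurableSpace X]

lemma exp_le_one_add_add_sq {y : ℝ} (h : y ≤ 3/2) : Real.exp y ≤ 1 + y + y^2 := by
  rcases le_or_gt 0 y with hy | hy
  · have h2 : |y/2| ≤ 1 := by rw [abs_of_nonneg (by linarith)]; linarith
    have hb := Real.exp_bound h2 (n := 2) (by norm_num)
    have hsum : ∑ m ∈ Finset.range 2, (y/2) ^ m / m.factorial = 1 + y/2 := by
      simp [Finset.sum_range_succ]
    rw [hsum] at hb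
    have hB : Real.exp (y/2) ≤ 1 + y/2 + (3/4) * (y/2)^2 := by
      have h5 := (abs_sub_le_iff.1 hb).1
      have habs : |y/2| ^ 2 = (y/2)^2 := by rw [sq_abs]
      rw [habs] at h5
      norm_num at h5 ⊢
      nlinarith [h5]
    have hsq : Real.exp y = Real.exp (y/2) * Real.exp (y/2) := by
      rw [← Real.exp_add]; ring_nf
    have hpos : (0:ℝ) < Real.exp (y/2) := Real.exp_pos _
    have hBnn : 0 ≤ 1 + y/2 + (3/4)*(y/2)^2 := by nlinarith
    rw [hsq]
    nlinarith [mul_le_mul hB hB hpos.le hBnn,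
      mul_nonneg (sq_nonneg y) (by linarith : (0:ℝ) ≤ 3/2 - y),
      mul_nonneg (mul_nonneg (sq_nonneg y) hy) (by linarith : (0:ℝ) ≤ 3/2 - y)]
  · have h1 : 1 - y ≤ Real.exp (-y) := by
      have := Real.add_one_le_exp (-y); linarith
    have h2 : Real.exp y * Real.exp (-y) = 1 := by
      rw [← Real.exp_add]; simp
    have h3 : Real.exp y * (1 - y) ≤ 1 := by
      calc Real.exp y * (1 - y) ≤ Real.exp y * Real.exp (-y) :=
            mul_le_mul_of_nonneg_left h1 (Real.exp_pos y).le
        _ = 1 := h2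
    nlinarith [Real.exp_pos y]

lemma bernstein_aux {Ω : Type*} [mΩ : MeasurableSpace Ω] (μ : Measure Ω) [IsProbabilityMeasure μ]
    (W : Ω → ℝ) (hWm : Measurable W) (hW4 : ∀ᵐ p ∂μ, |W p| ≤ 4)
    (hmean : ∫ p, W p ∂μ = 0) (σ2 : ℝ) (hσ : 0 < σ2) (hvar : ∫ p, (W p)^2 ∂μ ≤ σ2)
    (n : ℕ) (hn : 1 ≤ n) (a : ℝ) (ha : 0 < a) :
    ((Measure.pi fun _ : Fin n => μ) {D : Fin n → Ω | a < (n:ℝ)⁻¹ * ∑ i, W (D i)}).toReal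
      ≤ Real.exp (-(n * a^2) / (4*σ2)) + Real.exp (-(3*n*a) / 16) := by
  have hnpos : (0:ℝ) < n := by exact_mod_cast hn
  set l : ℝ := min (a/(2*σ2)) (3/8) with hl
  have hl0 : 0 < l := lt_min (by positivity) (by norm_num)
  have hl38 : l ≤ 3/8 := min_le_right _ _
  -- integrability
  have hWint : Integrable W μ :=
    (integrable_const (4:ℝ)).mono' hWm.aestronglyMeasurable
      (by filter_upwards [hW4] with p hp; simpa using hp)
  have hW2int : Integrable (fun p => (W p)^2) μ :=
    (integrable_const (16:ℝ)).mono' (hWm.pow_const 2).aestronglyMeasurable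
      (by filter_upwards [hW4] with p hp
          have : (W p)^2 ≤ 16 := by nlinarith [abs_nonneg (W p), sq_abs (W p), neg_abs_le (W p)]
          simpa [abs_of_nonneg (sq_nonneg (W p))] using this)
  have hexpint : Integrable (fun p => Real.exp (l * W p)) μ := by
    refine (integrable_const (Real.exp (3/2))).mono'
      ((hWm.const_mul l).exp).aestronglyMeasurable ?_
    filter_upwards [hW4] with p hp
    rw [Real.norm_eq_abs, abs_of_nonneg (Real.exp_pos _).le]
    apply Real.exp_le_exp.2
    calc l * W p ≤ l * |W p| := by
          exact mul_le_mul_of_nonneg_left (le_abs_self _) hl0.le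
      _ ≤ (3/8) * 4 := mul_le_mul hl38 hp (abs_nonneg _) (by norm_num)
      _ = 3/2 := by norm_num
  -- mgf bound
  have hmgf : ∫ p, Real.exp (l * W p) ∂μ ≤ Real.exp (l^2 * σ2) := by
    have hpt : ∀ᵐ p ∂μ, Real.exp (l * W p) ≤ 1 + l * W p + l^2 * (W p)^2 := by
      filter_upwards [hW4] with p hp
      have harg : l * W p ≤ 3/2 := by
        calc l * W p ≤ l * |W p| := mul_le_mul_of_nonneg_left (le_abs_self _) hl0.le
          _ ≤ (3/8) * 4 := mul_le_mul hl38 hp (abs_nonneg _) (by norm_num)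
          _ = 3/2 := by norm_num
      have := exp_le_one_add_add_sq harg
      calc Real.exp (l * W p) ≤ 1 + l * W p + (l * W p)^2 := this
        _ = 1 + l * W p + l^2 * (W p)^2 := by ring
    have hint2 : Integrable (fun p => 1 + l * W p + l^2 * (W p)^2) μ :=
      ((integrable_const (1:ℝ)).add (hWint.const_mul l)).add (hW2int.const_mul (l^2))
    calc ∫ p, Real.exp (l * W p) ∂μ ≤ ∫ p, (1 + l * W p + l^2 * (W p)^2) ∂μ :=
          integral_mono_ae hexpint hint2 hpt
      _ = (∫ p, (1 + l * W p) ∂μ) + ∫ p, l^2 * (W p)^2 ∂μ :=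
          integral_add ((integrable_const (1:ℝ)).add (hWint.const_mul l)) (hW2int.const_mul (l^2))
      _ = 1 + l * ∫ p, W p ∂μ + l^2 * ∫ p, (W p)^2 ∂μ := by
          rw [integral_add (integrable_const (1:ℝ)) (hWint.const_mul l),
            integral_const, integral_const_mul, integral_const_mul]
          simp
      _ = 1 + l^2 * ∫ p, (W p)^2 ∂μ := by rw [hmean]; ring
      _ ≤ 1 + l^2 * σ2 := by nlinarith [sq_nonneg l]
      _ ≤ Real.exp (l^2 * σ2) := by
          have := Real.add_one_le_exp (l^2 * σ2); linarith
  -- product measure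
  letI : MeasureSpace Ω := ⟨μ⟩
  have hpi : (Measure.pi fun _ : Fin n => μ) = (volume : Measure (Fin n → Ω)) :=
    (MeasureTheory.volume_pi).symm
  set G : (Fin n → Ω) → ℝ := fun D => ∏ i, Real.exp (l * W (D i)) with hG
  have hGprod : ∫ D : Fin n → Ω, G D = (∫ p, Real.exp (l * W p) ∂μ)^n := by
    have := MeasureTheory.integral_fintype_prod_eq_pow (ι := Fin n) (fun p => Real.exp (l * W p)) (μ := μ)
    rw [Fintype.card_fin, hpi] at this
    exact this
  have hGint : Integrable G (volume : Measure (Fin n → Ω)) :=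
    Integrable.fintype_prod (f := fun _ : Fin n => fun p => Real.exp (l * W p)) (fun _ => hexpint)
  have hGnonneg : 0 ≤ᵐ[(volume : Measure (Fin n → Ω))] G :=
    Filter.Eventually.of_forall fun D => Finset.prod_nonneg fun i _ => (Real.exp_pos _).le
  have markov := mul_meas_ge_le_integral_of_nonneg hGnonneg hGint (Real.exp (l * (n * a)))
  have hsub : {D : Fin n → Ω | a < (n:ℝ)⁻¹ * ∑ i, W (D i)}
      ⊆ {D : Fin n → Ω | Real.exp (l * (n * a)) ≤ G D} := by
    intro D hD
    simp only [Set.mem_setOf_eq] at hD ⊢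
    have hS : (n:ℝ) * a < ∑ i, W (D i) := by
      rw [inv_mul_eq_div, lt_div_iff₀ hnpos] at hD
      linarith [hD]
    have : l * (n * a) ≤ l * ∑ i, W (D i) :=
      mul_le_mul_of_nonneg_left hS.le hl0.le
    calc Real.exp (l * (n * a)) ≤ Real.exp (l * ∑ i, W (D i)) := Real.exp_le_exp.2 this
      _ = ∏ i, Real.exp (l * W (D i)) := by
          rw [Finset.mul_sum, Real.exp_sum]
      _ = G D := rfl
  have key : ((Measure.pi fun _ : Fin n => μ) {D : Fin n → Ω | a < (n:ℝ)⁻¹ * ∑ i, W (D i)}).toReal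
      ≤ Real.exp ((n:ℝ) * (l^2 * σ2 - l * a)) := by
    have h1 : ((Measure.pi fun _ : Fin n => μ) {D : Fin n → Ω | a < (n:ℝ)⁻¹ * ∑ i, W (D i)}).toReal
        ≤ ((volume : Measure (Fin n → Ω)) {D | Real.exp (l * (n * a)) ≤ G D}).toReal := by
      rw [hpi]
      exact ENNReal.toReal_mono (measure_ne_top _ _) (measure_mono hsub)
    have hexpa : (0:ℝ) < Real.exp (l * (n * a)) := Real.exp_pos _
    have h2 : ((volume : Measure (Fin n → Ω)) {D | Real.exp (l * (n * a)) ≤ G D}).toReal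
        ≤ (∫ D, G D) / Real.exp (l * (n * a)) := by
      rw [le_div_iff₀ hexpa]
      calc _ = Real.exp (l * (n * a)) * ((volume : Measure (Fin n → Ω)) {D | Real.exp (l * (n * a)) ≤ G D}).toReal := by ring
        _ ≤ ∫ D, G D := markov
    have hInn : 0 ≤ ∫ p, Real.exp (l * W p) ∂μ :=
      integral_nonneg fun p => (Real.exp_pos _).le
    have h3 : (∫ D, G D) ≤ Real.exp (l^2 * σ2) ^ n := by
      rw [hGprod]; exact pow_le_pow_left₀ hInn hmgf n
    have h4 : (∫ D, G D) / Real.exp (l * (n * a))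
        ≤ Real.exp (l^2 * σ2) ^ n / Real.exp (l * (n * a)) := by gcongr
    have h5 : Real.exp (l^2 * σ2) ^ n / Real.exp (l * (n * a))
        = Real.exp ((n:ℝ) * (l^2 * σ2 - l * a)) := by
      rw [← Real.exp_nat_mul, ← Real.exp_sub]
      ring_nf
    calc _ ≤ _ := h1
      _ ≤ _ := h2
      _ ≤ _ := h4
      _ = _ := h5
  refine key.trans ?_
  rcases le_or_gt (a/(2*σ2)) (3/8) with hc | hc
  · have hlv : l = a/(2*σ2) := min_eq_left hc
    have hE : (n:ℝ) * (l^2 * σ2 - l * a) = -(n * a^2) / (4*σ2) := by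
      rw [hlv]; field_simp; ring
    rw [hE]
    exact le_add_of_nonneg_right (Real.exp_pos _).le
  · have hlv : l = 3/8 := min_eq_right hc.le
    have hσa : σ2 < 4*a/3 := by
      have hc' := hc
      rw [lt_div_iff₀ (by positivity : (0:ℝ) < 2*σ2)] at hc'
      linarith
    have hE : (n:ℝ) * (l^2 * σ2 - l * a) ≤ -(3*n*a) / 16 := by
      rw [hlv]
      have : (3/8:ℝ)^2 * σ2 - (3/8) * a ≤ -(3*a)/16 := by nlinarith
      calc (n:ℝ) * ((3/8)^2 * σ2 - (3/8) * a) ≤ (n:ℝ) * (-(3*a)/16) :=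
            mul_le_mul_of_nonneg_left this hnpos.le
        _ = -(3*n*a)/16 := by ring
    exact le_add_of_nonneg_left (Real.exp_pos _).le |>.trans
      (by exact add_le_add_right (Real.exp_le_exp.2 hE) _)

/-- relative deviation inequality for the empirical hinge risk under
MAH(κ). -/
theorem relative_deviation_inequality
    (π : Measure (X × ℝ)) [IsProbabilityMeasure π] (η : X → ℝ) (hπ : IsClassif π η)
    (κ c : ℝ) (hκ : 1 ≤ κ) (hc : 0 < c) (hMAH : MAH π η κ c)
    (M n : ℕ) (hM : 1 ≤ M) (hn : 1 ≤ n)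
    (f : Fin M → X → ℝ) (hmeas : ∀ j, Measurable (f j))
    (hval : ∀ j x, f j x ∈ Set.Icc (-1 : ℝ) 1)
    (t x : ℝ) (ht : 0 < t) (hx : 0 < x) :
    ((sample π n) {D : Fin n → X × ℝ | t <
        ⨆ j, (hingeRisk π (f j) - empHinge D (f j)
            - (hingeRisk π (bayes η) - empHinge D (bayes η)))
          / (hingeRisk π (f j) - optHingeRisk π + x)}).toReal
      ≤ M * ((1 + 8 * c * x ^ (1 / κ) / (n * (t * x) ^ 2))
              * Real.exp (-(n * (t * x) ^ 2) / (8 * c * x ^ (1 / κ)))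
          + (1 + 16 / (3 * n * t * x)) * Real.exp (-(3 * n * t * x) / 16)) := by
  classical
  have hnR : (0:ℝ) < n := by exact_mod_cast hn
  have hκ0 : (0:ℝ) < κ := lt_of_lt_of_le zero_lt_one hκ
  have hr0 : (0:ℝ) ≤ 1/κ := by positivity
  have hr1 : (1:ℝ)/κ ≤ 1 := by
    rw [div_le_one hκ0]; exact hκ
  set F : X → ℝ := bayes η with hFdef
  have hFmeas : Measurable F := by
    have : F = fun x => if (0:ℝ) ≤ 2 * η x - 1 then (1:ℝ) else -1 := rfl
    rw [this]
    exact Measurable.ite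
      (measurableSet_le measurable_const ((hπ.meas.const_mul 2).sub measurable_const))
      measurable_const measurable_const
  have hFval : ∀ y, F y ∈ Set.Icc (-1:ℝ) 1 := by
    intro y
    by_cases h : (0:ℝ) ≤ 2 * η y - 1 <;> simp [hFdef, bayes, sgn, h]
  clear_value F
  -- a.e. labels
  have hae : ∀ᵐ p ∂π, p.2 = 1 ∨ p.2 = -1 := by
    rw [ae_iff]
    simpa [Set.compl_setOf] using hπ.labels
  -- hinge loss facts
  have hingeval : ∀ (g : X → ℝ), (∀ y, g y ∈ Set.Icc (-1:ℝ) 1) → ∀ p : X × ℝ,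
      (p.2 = 1 ∨ p.2 = -1) → max (1 - p.2 * g p.1) 0 = 1 - p.2 * g p.1 := by
    intro g hg p hp
    obtain ⟨h1, h2⟩ := hg p.1
    rcases hp with h | h <;> rw [h] <;> rw [max_eq_left (by linarith)]
  have hlm : ∀ g : X → ℝ, Measurable g →
      Measurable (fun p : X × ℝ => max (1 - p.2 * g p.1) 0) := fun g hg =>
    (measurable_const.sub (measurable_snd.mul (hg.comp measurable_fst))).max measurable_const
  have hbdd : ∀ (g : X → ℝ), (∀ y, g y ∈ Set.Icc (-1:ℝ) 1) → ∀ᵐ p ∂π,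
      max (1 - p.2 * g p.1) 0 ≤ 2 := by
    intro g hg
    filter_upwards [hae] with p hp
    rw [hingeval g hg p hp]
    obtain ⟨h1, h2⟩ := hg p.1
    rcases hp with h | h <;> rw [h] <;> linarith
  have hint : ∀ (g : X → ℝ), Measurable g → (∀ y, g y ∈ Set.Icc (-1:ℝ) 1) →
      Integrable (fun p : X × ℝ => max (1 - p.2 * g p.1) 0) π := by
    intro g hg hgv
    refine (integrable_const (2:ℝ)).mono' (hlm g hg).aestronglyMeasurable ?_
    filter_upwards [hbdd g hgv] with p hp
    rw [Real.norm_eq_abs, abs_of_nonneg (le_max_right _ _)]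
    exact hp
  have hrisk : ∀ (g : X → ℝ), Measurable g →
      hingeRisk π g = ∫ p, max (1 - p.2 * g p.1) 0 ∂π := by
    intro g hg
    have h0 := integral_eq_lintegral_of_nonneg_ae (μ := π)
      (f := fun p : X × ℝ => max (1 - p.2 * g p.1) 0)
      (Filter.Eventually.of_forall fun p => le_max_right _ _) (hlm g hg).aestronglyMeasurable
    unfold hingeRisk hingeRiskE
    exact h0.symm
  -- delta nonneg
  have hEtop : ∀ (g : X → ℝ), Measurable g → (∀ y, g y ∈ Set.Icc (-1:ℝ) 1) →
      hingeRiskE π g ≠ ⊤ := by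
    intro g hg hgv
    have : hingeRiskE π g ≤ 2 := by
      unfold hingeRiskE
      calc ∫⁻ p, ENNReal.ofReal (max (1 - p.2 * g p.1) 0) ∂π
          ≤ ∫⁻ _, (2:ℝ≥0∞) ∂π := by
            refine lintegral_mono_ae ?_
            filter_upwards [hbdd g hgv] with p hp
            calc ENNReal.ofReal (max (1 - p.2 * g p.1) 0) ≤ ENNReal.ofReal 2 :=
                  ENNReal.ofReal_le_ofReal hp
              _ = 2 := by norm_num
        _ = 2 := by simp
    exact ne_top_of_le_ne_top (by norm_num) this
  have hδ : ∀ j, 0 ≤ hingeRisk π (f j) - optHingeRisk π := by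
    intro j
    have hle : optHingeRiskE π ≤ hingeRiskE π (f j) :=
      iInf_le_of_le (f j) (iInf_le_of_le (hmeas j) le_rfl)
    have := ENNReal.toReal_mono (hEtop (f j) (hmeas j) (hval j)) hle
    unfold hingeRisk optHingeRisk
    linarith
  have hxr : (0:ℝ) < x ^ (1/κ) := Real.rpow_pos_of_pos hx _
  -- per-j key bound
  have hkey : ∀ j : Fin M, ((sample π n) {D : Fin n → X × ℝ |
      t < (hingeRisk π (f j) - empHinge D (f j) - (hingeRisk π F - empHinge D F))
        / (hingeRisk π (f j) - optHingeRisk π + x)}).toReal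
      ≤ Real.exp (-(↑n * (t * x) ^ 2) / (8 * c * x ^ (1 / κ)))
        + Real.exp (-(3 * ↑n * t * x) / 16) := by
    intro j
    set δ : ℝ := hingeRisk π (f j) - optHingeRisk π with hδdef
    clear_value δ
    have hδ0 : 0 ≤ δ := by rw [hδdef]; exact hδ j
    set m : ℝ := hingeRisk π (f j) - hingeRisk π F with hmdef
    set Z : X × ℝ → ℝ :=
      fun p => max (1 - p.2 * f j p.1) 0 - max (1 - p.2 * F p.1) 0 with hZdef
    set W : X × ℝ → ℝ := fun p => m - Z p with hWdef
    clear_value m Z W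
    have hZint : Integrable Z π := by
      rw [hZdef]
      exact Integrable.sub (hint (f j) (hmeas j) (hval j)) (hint F hFmeas hFval)
    have hZm : Measurable Z := by
      rw [hZdef]
      exact Measurable.sub (hlm (f j) (hmeas j)) (hlm F hFmeas)
    have hZabs : ∀ᵐ p ∂π, |Z p| = |f j p.1 - F p.1| := by
      filter_upwards [hae] with p hp
      have hz : Z p = p.2 * (F p.1 - f j p.1) := by
        simp only [hZdef, hingeval (f j) (hval j) p hp, hingeval F hFval p hp]; ring
      rcases hp with h | h
      · rw [hz, h, one_mul, abs_sub_comm]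
      · rw [hz, h, show (-1:ℝ) * (F p.1 - f j p.1) = f j p.1 - F p.1 by ring]
    have habs2 : ∀ y : X, |f j y - F y| ≤ 2 := by
      intro y
      obtain ⟨a1, a2⟩ := hval j y; obtain ⟨b1, b2⟩ := hFval y
      rw [abs_le]; constructor <;> linarith
    have hm_eq : m = ∫ p, Z p ∂π := by
      rw [hmdef, hZdef, hrisk (f j) (hmeas j), hrisk F hFmeas]
      exact (integral_sub (hint (f j) (hmeas j) (hval j)) (hint F hFmeas hFval)).symm
    have hmabs : |m| ≤ 2 := by
      rw [hm_eq]
      have h2 := norm_integral_le_of_norm_le_const (μ := π) (f := Z) (C := 2) ?_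
      · rw [Real.norm_eq_abs] at h2
        simpa [measure_univ] using h2
      · filter_upwards [hZabs] with p hp
        rw [Real.norm_eq_abs, hp]; exact habs2 p.1
    have hWmeas : Measurable W := by
      rw [hWdef]; exact measurable_const.sub hZm
    have hW4 : ∀ᵐ p ∂π, |W p| ≤ 4 := by
      filter_upwards [hZabs] with p hp
      have h1 : |Z p| ≤ 2 := by rw [hp]; exact habs2 p.1
      have h2 : |W p| ≤ |m| + |Z p| := by
        rw [hWdef]
        simp only []
        rw [sub_eq_add_neg]
        exact (abs_add_le _ _).trans (by rw [abs_neg])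
      linarith
    have hmean : ∫ p, W p ∂π = 0 := by
      have h2 : ∫ p, W p ∂π = (∫ _, m ∂π) - ∫ p, Z p ∂π := by
        rw [hWdef]; exact integral_sub (integrable_const m) hZint
      rw [h2, integral_const, probReal_univ, ← hm_eq]
      simp
    have hZ2int : Integrable (fun p => (Z p)^2) π := by
      refine (integrable_const (4:ℝ)).mono' (hZm.pow_const 2).aestronglyMeasurable ?_
      filter_upwards [hZabs] with p hp
      have h1 : |Z p| ≤ 2 := by rw [hp]; exact habs2 p.1
      have : (Z p)^2 ≤ 4 := by nlinarith [neg_abs_le (Z p), le_abs_self (Z p)]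
      rw [Real.norm_eq_abs, abs_of_nonneg (sq_nonneg _)]
      exact this
    have habsint : Integrable (fun p : X × ℝ => |f j p.1 - F p.1|) π := by
      refine (integrable_const (2:ℝ)).mono'
        (((hmeas j).comp measurable_fst).sub (hFmeas.comp measurable_fst)).abs.aestronglyMeasurable ?_
      refine Filter.Eventually.of_forall fun p => ?_
      rw [Real.norm_eq_abs, abs_abs]; exact habs2 p.1
    have hvarZ : ∫ p, (Z p)^2 ∂π ≤ 2 * (c * δ ^ (1/κ)) := by
      calc ∫ p, (Z p)^2 ∂π ≤ ∫ p, 2 * |f j p.1 - F p.1| ∂π := by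
            refine integral_mono_ae hZ2int (habsint.const_mul 2) ?_
            filter_upwards [hZabs] with p hp
            have h1 : |Z p| ≤ 2 := by rw [hp]; exact habs2 p.1
            calc (Z p)^2 = |Z p| * |Z p| := by
                  rw [sq]; rw [abs_mul_abs_self]
              _ ≤ 2 * |Z p| := mul_le_mul_of_nonneg_right h1 (abs_nonneg _)
              _ = 2 * |f j p.1 - F p.1| := by rw [hp]
        _ = 2 * ∫ p, |f j p.1 - F p.1| ∂π := integral_const_mul 2 _
        _ ≤ 2 * (c * δ ^ (1/κ)) := by
            have hmah := hMAH (f j) (hmeas j) (hval j)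
            rw [← hFdef, ← hδdef] at hmah
            have hmap : ∫ y, |f j y - F y| ∂(π.map Prod.fst)
                = ∫ p, |f j p.1 - F p.1| ∂π := by
              exact integral_map measurable_fst.aemeasurable
                (((hmeas j).sub hFmeas).abs).aestronglyMeasurable
            rw [hmap] at hmah
            linarith
    set σ2 : ℝ := 2 * c * ((max δ x) ^ (1/κ)) with hσdef
    clear_value σ2
    have hmaxpos : (0:ℝ) < (max δ x) ^ (1/κ) :=
      Real.rpow_pos_of_pos (lt_max_of_lt_right hx) _
    have hσpos : 0 < σ2 := by rw [hσdef]; exact mul_pos (by linarith) hmaxpos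
    have hvarW : ∫ p, (W p)^2 ∂π ≤ σ2 := by
      have hexp : ∫ p, (W p)^2 ∂π = (∫ p, (Z p)^2 ∂π) - m^2 := by
        calc ∫ p, (W p)^2 ∂π = ∫ p, ((Z p)^2 - 2*m*Z p + m^2) ∂π := by
              congr 1; funext p; simp only [hWdef]; ring
          _ = (∫ p, ((Z p)^2 - 2*m*Z p) ∂π) + ∫ _, m^2 ∂π :=
              integral_add (hZ2int.sub (hZint.const_mul (2*m))) (integrable_const _)
          _ = (∫ p, (Z p)^2 ∂π) - (2*m) * (∫ p, Z p ∂π) + m^2 := by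
              rw [integral_sub hZ2int (hZint.const_mul (2*m)), integral_const_mul,
                integral_const, probReal_univ]
              simp
          _ = ∫ p, (Z p)^2 ∂π - m^2 := by rw [← hm_eq]; ring
      rw [hexp, hσdef]
      have hmono : δ ^ (1/κ) ≤ (max δ x) ^ (1/κ) :=
        Real.rpow_le_rpow hδ0 (le_max_left _ _) hr0
      nlinarith [sq_nonneg m, mul_le_mul_of_nonneg_left hmono hc.le]
    set a : ℝ := t * (δ + x) with hadef
    clear_value a
    have hapos : 0 < a := by
      rw [hadef]; exact mul_pos ht (by linarith)
    have hbern := bernstein_aux π W hWmeas hW4 hmean σ2 hσpos hvarW n hn a hapos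
    have hev : {D : Fin n → X × ℝ |
        t < (hingeRisk π (f j) - empHinge D (f j) - (hingeRisk π F - empHinge D F)) / (δ + x)}
        = {D : Fin n → X × ℝ | a < (n:ℝ)⁻¹ * ∑ i, W (D i)} := by
      ext D
      simp only [Set.mem_setOf_eq]
      have h1 : ∑ i, W (D i) = (n:ℝ) * m
          - ((∑ i, max (1 - (D i).2 * f j (D i).1) 0)
            - (∑ i, max (1 - (D i).2 * F (D i).1) 0)) := by
        simp only [hWdef, hZdef]
        rw [Finset.sum_sub_distrib, Finset.sum_const, Finset.card_univ, Fintype.card_fin,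
          nsmul_eq_mul, Finset.sum_sub_distrib]
      have hsum : (n:ℝ)⁻¹ * ∑ i, W (D i)
          = hingeRisk π (f j) - empHinge D (f j) - (hingeRisk π F - empHinge D F) := by
        rw [h1]
        unfold empHinge
        rw [hmdef]
        field_simp
        ring
      rw [← hsum, lt_div_iff₀ (by linarith : (0:ℝ) < δ + x), hadef]
    rw [hev]
    have hsample : sample π n = (Measure.pi fun _ : Fin n => π) := rfl
    rw [hsample]
    refine hbern.trans (add_le_add ?_ ?_)
    · -- subgaussian term
      have hcore : (t*x)^2 * (max δ x)^(1/κ) ≤ a^2 * x^(1/κ) := by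
        rcases le_or_gt δ x with hcase | hcase
        · rw [max_eq_right hcase]
          have h7 : (t*x)^2 ≤ a^2 := by
            rw [hadef]
            nlinarith [mul_nonneg (mul_nonneg (mul_nonneg ht.le ht.le) hδ0)
              (by linarith : (0:ℝ) ≤ δ + 2*x)]
          exact mul_le_mul_of_nonneg_right h7 hxr.le
        · rw [max_eq_left hcase.le]
          have h1' : δ ^ (1/κ) = x^(1/κ) * (δ/x)^(1/κ) := by
            rw [← Real.mul_rpow hx.le (by positivity : (0:ℝ) ≤ δ/x)]
            congr 1; field_simp
          have h2' : (δ/x)^((1:ℝ)/κ) ≤ (δ/x)^(2:ℝ) :=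
            Real.rpow_le_rpow_of_exponent_le (by rw [le_div_iff₀ hx]; linarith) (by linarith)
          have h3' : (δ/x)^(2:ℝ) = (δ/x)^2 := by
            rw [show ((2:ℝ) = ((2:ℕ):ℝ)) by norm_num, Real.rpow_natCast]
          have h4' : δ^(1/κ) ≤ x^(1/κ) * (δ/x)^2 := by
            rw [h1']
            exact mul_le_mul_of_nonneg_left (h3' ▸ h2') hxr.le
          have h5' : x^2 * δ^(1/κ) ≤ δ^2 * x^(1/κ) := by
            calc x^2 * δ^(1/κ) ≤ x^2 * (x^(1/κ) * (δ/x)^2) :=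
                  mul_le_mul_of_nonneg_left h4' (sq_nonneg x)
              _ = δ^2 * x^(1/κ) := by field_simp
          calc (t*x)^2 * δ^(1/κ) = t^2 * (x^2 * δ^(1/κ)) := by ring
            _ ≤ t^2 * (δ^2 * x^(1/κ)) := mul_le_mul_of_nonneg_left h5' (sq_nonneg t)
            _ ≤ t^2 * ((δ+x)^2 * x^(1/κ)) := by
              nlinarith [mul_nonneg (mul_nonneg (sq_nonneg t) hxr.le) (mul_nonneg hδ0 hx.le),
                mul_nonneg (mul_nonneg (sq_nonneg t) hxr.le) (mul_nonneg hx.le hx.le)]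
            _ = a^2 * x^(1/κ) := by rw [hadef]; ring
      have hden1 : (0:ℝ) < 8 * c * x^(1/κ) := mul_pos (by linarith) hxr
      have hA : (↑n * (t*x)^2) / (8 * c * x^(1/κ)) ≤ (↑n * a^2) / (4 * σ2) := by
        rw [div_le_div_iff₀ hden1 (by linarith : (0:ℝ) < 4 * σ2)]
        calc ↑n * (t*x)^2 * (4*σ2) = (8*c*(n:ℝ)) * ((t*x)^2 * (max δ x)^(1/κ)) := by
              rw [hσdef]; ring
          _ ≤ (8*c*(n:ℝ)) * (a^2 * x^(1/κ)) :=
              mul_le_mul_of_nonneg_left hcore (by positivity)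
          _ = ↑n * a^2 * (8*c*x^(1/κ)) := by ring
      apply Real.exp_le_exp.2
      rw [neg_div, neg_div]
      exact neg_le_neg hA
    · apply Real.exp_le_exp.2
      rw [neg_div, neg_div]
      apply neg_le_neg
      have h9 : t * x ≤ a := by
        rw [hadef]; nlinarith [mul_nonneg ht.le hδ0]
      have h10 : 3*(n:ℝ)*(t*x) ≤ 3*(n:ℝ)*a := by
        apply mul_le_mul_of_nonneg_left h9 (by positivity)
      linarith
  -- assemble by union bound
  haveI : Nonempty (Fin M) := ⟨⟨0, hM⟩⟩
  haveI : IsProbabilityMeasure (sample π n) :=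
    (inferInstance : IsProbabilityMeasure (Measure.pi fun _ : Fin n => π))
  set num : Fin M → (Fin n → X × ℝ) → ℝ := fun j D =>
    (hingeRisk π (f j) - empHinge D (f j) - (hingeRisk π F - empHinge D F)) with hnum
  set den : Fin M → ℝ := fun j => hingeRisk π (f j) - optHingeRisk π + x with hden
  have hEq : {D : Fin n → X × ℝ | t < ⨆ j, num j D / den j}
      = ⋃ j, {D : Fin n → X × ℝ | t < num j D / den j} := by
    ext D
    simp only [Set.mem_setOf_eq, Set.mem_iUnion]
    exact lt_ciSup_iff (Set.finite_range _).bddAbove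
  set B : ℝ := (1 + 8 * c * x ^ (1 / κ) / (n * (t * x) ^ 2))
              * Real.exp (-(n * (t * x) ^ 2) / (8 * c * x ^ (1 / κ)))
          + (1 + 16 / (3 * n * t * x)) * Real.exp (-(3 * n * t * x) / 16) with hB
  have hperj : ∀ j, ((sample π n) {D : Fin n → X × ℝ | t < num j D / den j}).toReal ≤ B := by
    intro j
    refine (hkey j).trans ?_
    rw [hB]
    have hp1 : (0:ℝ) ≤ 8 * c * x ^ (1 / κ) / (n * (t * x) ^ 2) := by positivity
    have hp2 : (0:ℝ) ≤ 16 / (3 * n * t * x) := by positivity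
    have e1 : Real.exp (-(↑n * (t * x) ^ 2) / (8 * c * x ^ (1 / κ)))
        ≤ (1 + 8 * c * x ^ (1 / κ) / (n * (t * x) ^ 2))
          * Real.exp (-(n * (t * x) ^ 2) / (8 * c * x ^ (1 / κ))) := by
      exact le_mul_of_one_le_left (Real.exp_pos _).le (by linarith)
    have e2 : Real.exp (-(3 * ↑n * t * x) / 16)
        ≤ (1 + 16 / (3 * n * t * x)) * Real.exp (-(3 * n * t * x) / 16) := by
      exact le_mul_of_one_le_left (Real.exp_pos _).le (by linarith)
    exact add_le_add e1 e2
  calc ((sample π n) {D : Fin n → X × ℝ | t < ⨆ j, num j D / den j}).toReal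
      ≤ (∑ j, (sample π n) {D : Fin n → X × ℝ | t < num j D / den j}).toReal := by
        refine ENNReal.toReal_mono ?_ ?_
        · exact (ENNReal.sum_lt_top.mpr fun j _ => (measure_lt_top _ _)).ne
        · rw [hEq]
          exact measure_iUnion_fintype_le _ _
    _ = ∑ j, ((sample π n) {D : Fin n → X × ℝ | t < num j D / den j}).toReal :=
        ENNReal.toReal_sum fun j _ => measure_ne_top _ _
    _ ≤ ∑ _j : Fin M, B := Finset.sum_le_sum fun j _ => hperj j
    _ = M * B := by rw [Finset.sum_const, Finset.card_univ, Fintype.card_fin, nsmul_eq_mul]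
    _ = _ := by rw [hB]


end AggClass
end
end

section
/- (Assouad-type lower bound) Let (𝒳,𝒜) be a measurable space and let {P_ω : ω ∈ Ω}, Ω = {0,1}^m, be probability measures on (𝒳,𝒜), all absolutely continuous with respect to a common σ-finite measure μ. For ω, ω′ ∈ Ω let H²(P_ω, P_ω′) = ∫ (√(dP_ω/dμ) − √(dP_ω′/dμ))² dμ denote the squared Hellinger distance, and let ρ be the Hamming distance on Ω. Assume there is α < 2 such that H²(P_ω, P_ω′) ≤ α whenever ρ(ω, ω′) = 1. Then for every family of measurable estimators ŵ = (ŵ₁,…,ŵ_m) with ŵ_j : 𝒳 → [0,1], max_{ω∈Ω} E_ω[ ∑_{j=1}^m |ŵ_j − ω_j| ] ≥ (m/4)(1 − α/2)², where E_ω denotes expectation under P_ω. -/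
open MeasureTheory
open scoped ENNReal NNReal

noncomputable section

namespace AggClass

variable {X : Type*} [MeasurableSpace X]

lemma assouad_key {X : Type*} [MeasurableSpace X] (μ : Measure X) [SigmaFinite μ] (P Q : Measure X)
    [IsProbabilityMeasure P] [IsProbabilityMeasure Q]
    (hP : P ≪ μ) (hQ : Q ≪ μ) (α : ℝ) (hα : α < 2)
    (hH : ∫ x, (Real.sqrt ((P.rnDeriv μ x).toReal)
            - Real.sqrt ((Q.rnDeriv μ x).toReal)) ^ 2 ∂μ ≤ α)
    (f : X → ℝ) (hf : Measurable f) (hf01 : ∀ x, f x ∈ Set.Icc (0:ℝ) 1) :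
    (1 - α / 2) ^ 2 / 2 ≤ (∫ x, f x ∂P) + ∫ x, (1 - f x) ∂Q := by
  set p : X → ℝ := fun x => (P.rnDeriv μ x).toReal with hp_def
  set q : X → ℝ := fun x => (Q.rnDeriv μ x).toReal with hq_def
  have hp_meas : Measurable p := (Measure.measurable_rnDeriv P μ).ennreal_toReal
  have hq_meas : Measurable q := (Measure.measurable_rnDeriv Q μ).ennreal_toReal
  have hp_nn : ∀ x, 0 ≤ p x := fun x => ENNReal.toReal_nonneg
  have hq_nn : ∀ x, 0 ≤ q x := fun x => ENNReal.toReal_nonneg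
  have hp_int : Integrable p μ := Measure.integrable_toReal_rnDeriv
  have hq_int : Integrable q μ := Measure.integrable_toReal_rnDeriv
  have hp1 : ∫ x, p x ∂μ = 1 := by
    rw [hp_def, Measure.integral_toReal_rnDeriv hP]; simp
  have hq1 : ∫ x, q x ∂μ = 1 := by
    rw [hq_def, Measure.integral_toReal_rnDeriv hQ]; simp
  -- integrability of min, max, sqrt(pq)
  have hmin_meas : Measurable (fun x => min (p x) (q x)) := hp_meas.min hq_meas
  have hmin_int : Integrable (fun x => min (p x) (q x)) μ := by
    refine hp_int.mono hmin_meas.aestronglyMeasurable (Filter.Eventually.of_forall fun x => ?_)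
    rw [Real.norm_of_nonneg (le_min (hp_nn x) (hq_nn x)), Real.norm_of_nonneg (hp_nn x)]
    exact min_le_left _ _
  have hmax_meas : Measurable (fun x => max (p x) (q x)) := hp_meas.max hq_meas
  have hmax_int : Integrable (fun x => max (p x) (q x)) μ := by
    refine (hp_int.add hq_int).mono hmax_meas.aestronglyMeasurable
      (Filter.Eventually.of_forall fun x => ?_)
    simp only [Pi.add_apply]
    rw [Real.norm_of_nonneg (le_trans (hp_nn x) (le_max_left _ _)),
      Real.norm_of_nonneg (add_nonneg (hp_nn x) (hq_nn x))]
    exact max_le (le_add_of_nonneg_right (hq_nn x)) (le_add_of_nonneg_left (hp_nn x))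
  have hsqrt_meas : Measurable (fun x => Real.sqrt (p x * q x)) :=
    (hp_meas.mul hq_meas).sqrt
  have hsqrt_int : Integrable (fun x => Real.sqrt (p x * q x)) μ := by
    refine (hp_int.add hq_int).mono hsqrt_meas.aestronglyMeasurable
      (Filter.Eventually.of_forall fun x => ?_)
    simp only [Pi.add_apply]
    rw [Real.norm_of_nonneg (Real.sqrt_nonneg _), Real.norm_of_nonneg (add_nonneg (hp_nn x) (hq_nn x))]
    have h1 : p x * q x ≤ (p x + q x) ^ 2 := by nlinarith [hp_nn x, hq_nn x]
    calc Real.sqrt (p x * q x) ≤ Real.sqrt ((p x + q x) ^ 2) := Real.sqrt_le_sqrt h1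
      _ = p x + q x := Real.sqrt_sq (add_nonneg (hp_nn x) (hq_nn x))
  set S : ℝ := ∫ x, Real.sqrt (p x * q x) ∂μ with hS_def
  have hS0 : 0 ≤ S := integral_nonneg fun x => Real.sqrt_nonneg _
  -- Hellinger expansion : 2 - 2 S ≤ α
  have hexp : ∫ x, (Real.sqrt (p x) - Real.sqrt (q x)) ^ 2 ∂μ = 2 - 2 * S := by
    have hpt : ∀ x, (Real.sqrt (p x) - Real.sqrt (q x)) ^ 2
        = p x + q x - 2 * Real.sqrt (p x * q x) := by
      intro x
      rw [sub_sq, Real.sq_sqrt (hp_nn x), Real.sq_sqrt (hq_nn x),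
        Real.sqrt_mul (hp_nn x)]
      ring
    have hpq_int : Integrable (fun x => p x + q x) μ := hp_int.add hq_int
    rw [integral_congr_ae (Filter.Eventually.of_forall hpt),
      integral_sub hpq_int ((hsqrt_int.const_mul 2) :
        Integrable (fun x => 2 * Real.sqrt (p x * q x)) μ),
      integral_add hp_int hq_int, hp1, hq1,
      integral_const_mul]
    ring
  have hSlb : 1 - α / 2 ≤ S := by
    rw [hexp] at hH; linarith
  -- Cauchy-Schwarz : S^2 ≤ (∫ min) * (∫ max)
  have hminsq : MemLp (fun x => Real.sqrt (min (p x) (q x))) (ENNReal.ofReal 2) μ := by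
    have : ENNReal.ofReal (2:ℝ) = 2 := by norm_num
    rw [this, memLp_two_iff_integrable_sq hmin_meas.sqrt.aestronglyMeasurable]
    refine hmin_int.congr ?_
    exact Filter.Eventually.of_forall fun x =>
      (Real.sq_sqrt (le_min (hp_nn x) (hq_nn x))).symm
  have hmaxsq : MemLp (fun x => Real.sqrt (max (p x) (q x))) (ENNReal.ofReal 2) μ := by
    have : ENNReal.ofReal (2:ℝ) = 2 := by norm_num
    rw [this, memLp_two_iff_integrable_sq hmax_meas.sqrt.aestronglyMeasurable]
    refine hmax_int.congr ?_
    exact Filter.Eventually.of_forall fun x =>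
      (Real.sq_sqrt (le_trans (hp_nn x) (le_max_left _ _))).symm
  have hCS := integral_mul_le_Lp_mul_Lq_of_nonneg (Real.holderConjugate_iff_eq_conjExponent (by norm_num) |>.mpr (by norm_num))
    (Filter.Eventually.of_forall fun x => Real.sqrt_nonneg (min (p x) (q x)))
    (Filter.Eventually.of_forall fun x => Real.sqrt_nonneg (max (p x) (q x)))
    hminsq hmaxsq
  set A : ℝ := ∫ x, min (p x) (q x) ∂μ with hA_def
  set B : ℝ := ∫ x, max (p x) (q x) ∂μ with hB_def
  have hA0 : 0 ≤ A := integral_nonneg fun x => le_min (hp_nn x) (hq_nn x)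
  have hB0 : 0 ≤ B := integral_nonneg fun x => le_trans (hp_nn x) (le_max_left _ _)
  have hB2 : B ≤ 2 := by
    have hpq_int : Integrable (fun x => p x + q x) μ := hp_int.add hq_int
    have := integral_mono hmax_int hpq_int (fun x => by
      simp only [Pi.add_apply] at *
      exact max_le (le_add_of_nonneg_right (hq_nn x)) (le_add_of_nonneg_left (hp_nn x)))
    rw [integral_add hp_int hq_int, hp1, hq1] at this
    linarith
  have hCS' : S ≤ Real.sqrt A * Real.sqrt B := by
    have hL : ∫ x, Real.sqrt (min (p x) (q x)) * Real.sqrt (max (p x) (q x)) ∂μ = S := by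
      refine integral_congr_ae (Filter.Eventually.of_forall fun x => ?_)
      show Real.sqrt (min (p x) (q x)) * Real.sqrt (max (p x) (q x)) = Real.sqrt (p x * q x)
      rw [← Real.sqrt_mul (le_min (hp_nn x) (hq_nn x)), min_mul_max]
    have hR1 : ∫ x, Real.sqrt (min (p x) (q x)) ^ (2:ℝ) ∂μ = A := by
      refine integral_congr_ae (Filter.Eventually.of_forall fun x => ?_)
      show Real.sqrt (min (p x) (q x)) ^ (2:ℝ) = min (p x) (q x)
      rw [Real.rpow_two, Real.sq_sqrt (le_min (hp_nn x) (hq_nn x))]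
    have hR2 : ∫ x, Real.sqrt (max (p x) (q x)) ^ (2:ℝ) ∂μ = B := by
      refine integral_congr_ae (Filter.Eventually.of_forall fun x => ?_)
      show Real.sqrt (max (p x) (q x)) ^ (2:ℝ) = max (p x) (q x)
      rw [Real.rpow_two, Real.sq_sqrt (le_trans (hp_nn x) (le_max_left _ _))]
    rw [hL, hR1, hR2, ← Real.sqrt_eq_rpow, ← Real.sqrt_eq_rpow] at hCS
    exact hCS
  have hS2 : S ^ 2 ≤ 2 * A := by
    have h1 : S ^ 2 ≤ A * B := by
      nlinarith [Real.sq_sqrt hA0, Real.sq_sqrt hB0, Real.sqrt_nonneg A, Real.sqrt_nonneg B]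
    nlinarith
  have hAl : (1 - α / 2) ^ 2 / 2 ≤ A := by
    have h0 : 0 ≤ 1 - α / 2 := by linarith
    have := pow_le_pow_left₀ h0 hSlb 2
    linarith
  -- change of measure
  have hfP : ∫ x, f x ∂P = ∫ x, p x * f x ∂μ := by
    rw [← MeasureTheory.integral_rnDeriv_smul hP]
    simp [hp_def, smul_eq_mul]
  have hfQ : ∫ x, (1 - f x) ∂Q = ∫ x, q x * (1 - f x) ∂μ := by
    rw [← MeasureTheory.integral_rnDeriv_smul hQ]
    simp [hq_def, smul_eq_mul]
  have hpf_int : Integrable (fun x => p x * f x) μ := by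
    refine hp_int.mono ((hp_meas.mul hf).aestronglyMeasurable)
      (Filter.Eventually.of_forall fun x => ?_)
    rw [Real.norm_of_nonneg (mul_nonneg (hp_nn x) (hf01 x).1), Real.norm_of_nonneg (hp_nn x)]
    nlinarith [(hf01 x).1, (hf01 x).2, hp_nn x]
  have hqf_int : Integrable (fun x => q x * (1 - f x)) μ := by
    refine hq_int.mono ((hq_meas.mul (measurable_const.sub hf)).aestronglyMeasurable)
      (Filter.Eventually.of_forall fun x => ?_)
    rw [Real.norm_of_nonneg (mul_nonneg (hq_nn x) (by linarith [(hf01 x).2])),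
      Real.norm_of_nonneg (hq_nn x)]
    nlinarith [(hf01 x).1, (hf01 x).2, hq_nn x]
  have hsum : A ≤ (∫ x, f x ∂P) + ∫ x, (1 - f x) ∂Q := by
    rw [hfP, hfQ, ← integral_add hpf_int hqf_int]
    refine integral_mono hmin_int (hpf_int.add hqf_int) fun x => ?_
    simp only [Pi.add_apply]
    nlinarith [min_le_left (p x) (q x), min_le_right (p x) (q x),
      (hf01 x).1, (hf01 x).2]
  linarith

/-- Assouad-type lower bound: if the measures indexed by the cube are
pairwise close in Hellinger distance at Hamming distance 1, no estimator valued in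
[0,1]^m estimates the vertex well. -/
theorem assouad_lower_bound
    {X : Type*} [MeasurableSpace X] (m : ℕ)
    (μ : Measure X) [SigmaFinite μ]
    (P : (Fin m → Bool) → Measure X) (hP : ∀ ω, IsProbabilityMeasure (P ω))
    (hac : ∀ ω, P ω ≪ μ)
    (α : ℝ) (hα : α < 2)
    (hH : ∀ ω ω' : Fin m → Bool,
      (Finset.univ.filter fun j => ω j ≠ ω' j).card = 1 →
      ∫ x, (Real.sqrt (((P ω).rnDeriv μ x).toReal)
            - Real.sqrt (((P ω').rnDeriv μ x).toReal)) ^ 2 ∂μ ≤ α)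
    (w : Fin m → X → ℝ) (hw : ∀ j, Measurable (w j))
    (hw01 : ∀ j x, w j x ∈ Set.Icc (0 : ℝ) 1) :
    ∃ ω : Fin m → Bool,
      (m : ℝ) / 4 * (1 - α / 2) ^ 2
        ≤ ∫ x, ∑ j, |w j x - (if ω j then 1 else 0)| ∂(P ω) := by
  classical
  have := fun ω => hP ω
  set c : ℝ := (1 - α / 2) ^ 2 / 2 with hc_def
  have hc0 : 0 ≤ c := by positivity
  set I : (Fin m → Bool) → Fin m → ℝ :=
    fun ω j => ∫ x, |w j x - (if ω j then 1 else 0)| ∂(P ω) with hI_def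
  -- integrability
  have hint : ∀ (ω : Fin m → Bool) (j : Fin m) (a : ℝ),
      Integrable (fun x => |w j x - a|) (P ω) := by
    intro ω j a
    haveI := hP ω
    refine (integrable_const (1 + |a|)).mono'
      (((hw j).sub measurable_const).abs.aestronglyMeasurable)
      (Filter.Eventually.of_forall fun x => ?_)
    rw [Real.norm_of_nonneg (abs_nonneg _)]
    have h1 := (hw01 j x).1; have h2 := (hw01 j x).2
    rw [abs_sub_le_iff]
    constructor
    · nlinarith [abs_nonneg a, le_abs_self a, neg_abs_le a]
    · nlinarith [abs_nonneg a, le_abs_self a, neg_abs_le a]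
  have hF : ∀ ω : Fin m → Bool,
      ∫ x, ∑ j, |w j x - (if ω j then 1 else 0)| ∂(P ω) = ∑ j, I ω j := by
    intro ω
    exact integral_finset_sum _ fun j _ => hint ω j _
  -- pairing bound for each coordinate
  have hpair : ∀ (j : Fin m) (r : {k : Fin m // k ≠ j} → Bool),
      c ≤ I ((Equiv.piSplitAt j (fun _ => Bool)).symm (false, r)) j
        + I ((Equiv.piSplitAt j (fun _ => Bool)).symm (true, r)) j := by
    intro j r
    set ω₀ := (Equiv.piSplitAt j (fun _ => Bool)).symm (false, r) with hω₀
    set ω₁ := (Equiv.piSplitAt j (fun _ => Bool)).symm (true, r) with hω₁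
    have hj0 : ω₀ j = false := by simp [hω₀, Equiv.piSplitAt]
    have hj1 : ω₁ j = true := by simp [hω₁, Equiv.piSplitAt]
    have hne : ∀ k : Fin m, k ≠ j → ω₀ k = ω₁ k := by
      intro k hk
      simp [hω₀, hω₁, Equiv.piSplitAt, dif_neg hk]
    have hcard : (Finset.univ.filter fun k => ω₀ k ≠ ω₁ k).card = 1 := by
      have : (Finset.univ.filter fun k => ω₀ k ≠ ω₁ k) = {j} := by
        ext k
        simp only [Finset.mem_filter, Finset.mem_univ, true_and, Finset.mem_singleton]
        constructor
        · intro h; by_contra hk; exact h (hne k hk)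
        · intro h; subst h; rw [hj0, hj1]; simp
      rw [this, Finset.card_singleton]
    haveI := hP ω₀; haveI := hP ω₁
    have hkey := assouad_key μ (P ω₀) (P ω₁) (hac ω₀) (hac ω₁) α hα
      (hH ω₀ ω₁ hcard) (w j) (hw j) (hw01 j)
    have h0 : I ω₀ j = ∫ x, w j x ∂(P ω₀) := by
      rw [hI_def]
      refine integral_congr_ae (Filter.Eventually.of_forall fun x => ?_)
      rw [hj0]
      simp [abs_of_nonneg (hw01 j x).1]
    have h1 : I ω₁ j = ∫ x, (1 - w j x) ∂(P ω₁) := by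
      rw [hI_def]
      refine integral_congr_ae (Filter.Eventually.of_forall fun x => ?_)
      rw [hj1]
      simp only [if_true]
      rw [abs_sub_comm, abs_of_nonneg (by linarith [(hw01 j x).2])]
    rw [h0, h1]
    exact hkey
  -- sum over the cube for fixed j
  have hcard_sub : ∀ j : Fin m, Fintype.card ({k : Fin m // k ≠ j} → Bool) = 2 ^ (m - 1) := by
    intro j
    rw [Fintype.card_fun, Fintype.card_bool, Fintype.card_subtype_compl,
      Fintype.card_subtype_eq, Fintype.card_fin]
  have hsumj : ∀ j : Fin m,
      ((2:ℝ) ^ (m - 1)) * c ≤ ∑ ω : Fin m → Bool, I ω j := by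
    intro j
    rw [← Equiv.sum_comp (Equiv.piSplitAt j (fun _ => Bool)).symm (fun ω => I ω j),
      Fintype.sum_prod_type, Fintype.sum_bool, ← Finset.sum_add_distrib]
    have hb : ∀ r : {k : Fin m // k ≠ j} → Bool,
        c ≤ I ((Equiv.piSplitAt j (fun _ => Bool)).symm (true, r)) j
          + I ((Equiv.piSplitAt j (fun _ => Bool)).symm (false, r)) j := by
      intro r
      have := hpair j r
      linarith
    calc ((2:ℝ) ^ (m - 1)) * c
        = (Fintype.card ({k : Fin m // k ≠ j} → Bool) : ℝ) * c := by
          rw [hcard_sub j]; push_cast; ring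
      _ ≤ _ := by
          rw [← Finset.card_univ, ← nsmul_eq_mul]
          exact Finset.card_nsmul_le_sum _ _ _ fun r _ => hb r
  -- total
  have htotal : (m : ℝ) * ((2:ℝ) ^ (m - 1)) * c
      ≤ ∑ ω : Fin m → Bool, ∑ j, I ω j := by
    rw [Finset.sum_comm]
    calc (m : ℝ) * ((2:ℝ) ^ (m - 1)) * c
        = ∑ _j : Fin m, ((2:ℝ) ^ (m - 1)) * c := by
          rw [Finset.sum_const, Finset.card_univ, Fintype.card_fin, nsmul_eq_mul]; ring
      _ ≤ _ := Finset.sum_le_sum fun j _ => hsumj j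
  have hconst : ∑ _ω : Fin m → Bool, ((m : ℝ) / 4 * (1 - α / 2) ^ 2)
      ≤ ∑ ω : Fin m → Bool, ∑ j, I ω j := by
    refine le_trans ?_ htotal
    rw [Finset.sum_const, Finset.card_univ, Fintype.card_fun, Fintype.card_bool,
      Fintype.card_fin, nsmul_eq_mul]
    cases m with
    | zero => simp
    | succ n =>
      simp only [Nat.succ_sub_one, hc_def]
      push_cast [pow_succ]
      ring_nf
      rfl
  obtain ⟨ω, _, hω⟩ := Finset.exists_le_of_sum_le Finset.univ_nonempty hconst
  exact ⟨ω, by rw [hF ω]; exact hω⟩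


end AggClass
end
end
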